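/- arXiv:2112.12338 — 9 statements merged into one kernel-verified Lean document; each statement's English description precedes it below -/
import Mathlib

section
/- Let μ be a σ-finite measure on a measurable space Ω and let f, g : Ω → [0,∞) be measurable with ∫ f dμ = ∫ g dμ = 1. Fix q, θ ∈ (0,1), and define the MAP decision regions D_1 = {ω : q·f(ω) ≥ (1−q)·g(ω)} (decide H_1) and D_2 = {ω : q·f(ω) < (1−q)·g(ω)} (decide H_2), the probability of error P_error(q, θ) = θ·∫_{D_2} f dμ + (1−θ)·∫_{D_1} g dμ, and the Bhattacharyya coefficient B = ∫ √(f·g) dμ. Then (1/2)·min{θ, 1−θ}·B² ≤ P_error(q, θ) ≤ max{√((1−q)/q)·θ, √(q/(1−q))·(1−θ)}·B. -/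
open MeasureTheory

/-- **Bounds on the probability of error for the MAP rule (binary case).**
Let `μ` be a σ-finite measure, `f, g` nonnegative measurable densities integrating to `1`,
and `q, θ ∈ (0,1)`. With the MAP decision regions `D₁ = {q·f ≥ (1−q)·g}` and
`D₂ = {q·f < (1−q)·g}`, the probability of error
`P_error = θ·∫_{D₂} f + (1−θ)·∫_{D₁} g` satisfies
`(1/2)·min{θ,1−θ}·B² ≤ P_error ≤ max{√((1−q)/q)·θ, √(q/(1−q))·(1−θ)}·B`,
where `B = ∫ √(f·g)` is the Bhattacharyya coefficient. -/
theorem MAP_error_bhattacharyya_bounds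
    {Ω : Type*} [MeasurableSpace Ω] (μ : Measure Ω) [SigmaFinite μ]
    (f g : Ω → ℝ) (hf : Measurable f) (hg : Measurable g)
    (hf0 : ∀ ω, 0 ≤ f ω) (hg0 : ∀ ω, 0 ≤ g ω)
    (hfi : ∫ ω, f ω ∂μ = 1) (hgi : ∫ ω, g ω ∂μ = 1)
    (q θ : ℝ) (hq0 : 0 < q) (hq1 : q < 1) (hθ0 : 0 < θ) (hθ1 : θ < 1) :
    (1 / 2) * min θ (1 - θ) * (∫ ω, Real.sqrt (f ω * g ω) ∂μ) ^ 2
        ≤ θ * (∫ ω in {ω | q * f ω < (1 - q) * g ω}, f ω ∂μ)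
          + (1 - θ) * (∫ ω in {ω | q * f ω ≥ (1 - q) * g ω}, g ω ∂μ)
      ∧ θ * (∫ ω in {ω | q * f ω < (1 - q) * g ω}, f ω ∂μ)
          + (1 - θ) * (∫ ω in {ω | q * f ω ≥ (1 - q) * g ω}, g ω ∂μ)
        ≤ max (Real.sqrt ((1 - q) / q) * θ) (Real.sqrt (q / (1 - q)) * (1 - θ))
            * ∫ ω, Real.sqrt (f ω * g ω) ∂μ := by
  have hq1' : 0 < 1 - q := by linarith
  set D : Set Ω := {ω | q * f ω < (1 - q) * g ω} with hD
  have hDm : MeasurableSet D := measurableSet_lt (hf.const_mul q) (hg.const_mul (1 - q))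
  have hDc : {ω | q * f ω ≥ (1 - q) * g ω} = Dᶜ := by
    ext ω; simp [hD, Set.mem_setOf_eq, not_lt, ge_iff_le]
  rw [hDc]
  -- integrability
  have hfint : Integrable f μ := by
    by_contra h; rw [integral_undef h] at hfi; norm_num at hfi
  have hgint : Integrable g μ := by
    by_contra h; rw [integral_undef h] at hgi; norm_num at hgi
  set s : Ω → ℝ := fun ω => Real.sqrt (f ω * g ω) with hs
  have hsm : Measurable s := (hf.mul hg).sqrt
  have hs0 : ∀ ω, 0 ≤ s ω := fun ω => Real.sqrt_nonneg _
  have hsle : ∀ ω, s ω ≤ f ω + g ω := by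
    intro ω
    have h1 : f ω * g ω ≤ (f ω + g ω) ^ 2 := by nlinarith [hf0 ω, hg0 ω]
    calc s ω ≤ Real.sqrt ((f ω + g ω) ^ 2) := Real.sqrt_le_sqrt h1
      _ = f ω + g ω := Real.sqrt_sq (add_nonneg (hf0 ω) (hg0 ω))
  have hsint : Integrable s μ := by
    refine (hfint.add hgint).mono' hsm.aestronglyMeasurable ?_
    filter_upwards with ω
    rw [Real.norm_of_nonneg (hs0 ω), Pi.add_apply]; exact hsle ω
  set m : Ω → ℝ := fun ω => min (f ω) (g ω) with hm
  set M : Ω → ℝ := fun ω => max (f ω) (g ω) with hM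
  have hmm : Measurable m := hf.min hg
  have hMm : Measurable M := hf.max hg
  have hm0 : ∀ ω, 0 ≤ m ω := fun ω => le_min (hf0 ω) (hg0 ω)
  have hM0 : ∀ ω, 0 ≤ M ω := fun ω => le_trans (hf0 ω) (le_max_left _ _)
  have hmint : Integrable m μ := by
    refine hfint.mono' hmm.aestronglyMeasurable ?_
    filter_upwards with ω
    rw [Real.norm_of_nonneg (hm0 ω)]; exact min_le_left _ _
  have hMint : Integrable M μ := by
    refine (hfint.add hgint).mono' hMm.aestronglyMeasurable ?_
    filter_upwards with ω
    rw [Real.norm_of_nonneg (hM0 ω), Pi.add_apply]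
    exact max_le (by linarith [hg0 ω]) (by linarith [hf0 ω])
  have hminθ : 0 < min θ (1 - θ) := lt_min hθ0 (by linarith)
  constructor
  · -- LOWER BOUND
    -- Cauchy–Schwarz: (∫ s)² ≤ (∫ m) * (∫ M)
    have hconj : (2 : ℝ).HolderConjugate 2 := Real.holderConjugate_iff.mpr ⟨one_lt_two, by norm_num⟩
    have hu2 : (fun ω => Real.sqrt (m ω) ^ (2:ℝ)) = m := by
      funext ω; rw [Real.rpow_two, Real.sq_sqrt (hm0 ω)]
    have hv2 : (fun ω => Real.sqrt (M ω) ^ (2:ℝ)) = M := by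
      funext ω; rw [Real.rpow_two, Real.sq_sqrt (hM0 ω)]
    have hupl : MemLp (fun ω => Real.sqrt (m ω)) (ENNReal.ofReal 2) μ := by
      rw [show ENNReal.ofReal 2 = 2 by norm_num]
      rw [memLp_two_iff_integrable_sq hmm.sqrt.aestronglyMeasurable]
      have : (fun ω => Real.sqrt (m ω) ^ 2) = m := by
        funext ω; rw [Real.sq_sqrt (hm0 ω)]
      rw [this]; exact hmint
    have hvpl : MemLp (fun ω => Real.sqrt (M ω)) (ENNReal.ofReal 2) μ := by
      rw [show ENNReal.ofReal 2 = 2 by norm_num]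
      rw [memLp_two_iff_integrable_sq hMm.sqrt.aestronglyMeasurable]
      have : (fun ω => Real.sqrt (M ω) ^ 2) = M := by
        funext ω; rw [Real.sq_sqrt (hM0 ω)]
      rw [this]; exact hMint
    have hCS := integral_mul_le_Lp_mul_Lq_of_nonneg hconj
      (Filter.Eventually.of_forall fun ω => Real.sqrt_nonneg (m ω))
      (Filter.Eventually.of_forall fun ω => Real.sqrt_nonneg (M ω))
      hupl hvpl
    rw [hu2, hv2] at hCS
    have hsB : ∀ ω, s ω = Real.sqrt (m ω) * Real.sqrt (M ω) := by
      intro ω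
      rw [← Real.sqrt_mul (hm0 ω), min_mul_max]
    have hB : ∫ ω, s ω ∂μ = ∫ ω, Real.sqrt (m ω) * Real.sqrt (M ω) ∂μ :=
      integral_congr_ae (Filter.Eventually.of_forall hsB)
    have hmI0 : 0 ≤ ∫ ω, m ω ∂μ := integral_nonneg hm0
    have hMI2 : ∫ ω, M ω ∂μ ≤ 2 := by
      have h6 : ∫ ω, M ω ∂μ ≤ ∫ ω, (f ω + g ω) ∂μ := by
        refine integral_mono hMint (hfint.add hgint) ?_
        intro ω; simp only [Pi.add_apply]
        exact max_le (by linarith [hg0 ω]) (by linarith [hf0 ω])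
      rw [integral_add hfint hgint, hfi, hgi] at h6; linarith
    -- so B² ≤ 2 * ∫ m
    have hBsq : (∫ ω, s ω ∂μ) ^ 2 ≤ 2 * ∫ ω, m ω ∂μ := by
      have hB0 : 0 ≤ ∫ ω, s ω ∂μ := integral_nonneg hs0
      have h1 : ∫ ω, s ω ∂μ ≤ (∫ ω, m ω ∂μ) ^ ((1:ℝ)/2) * (∫ ω, M ω ∂μ) ^ ((1:ℝ)/2) := by
        rw [hB]; exact hCS
      have hMI0 : 0 ≤ ∫ ω, M ω ∂μ := integral_nonneg hM0
      have h2 : (∫ ω, s ω ∂μ) ^ 2 ≤ ((∫ ω, m ω ∂μ) ^ ((1:ℝ)/2) * (∫ ω, M ω ∂μ) ^ ((1:ℝ)/2)) ^ 2 :=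
        pow_le_pow_left₀ hB0 h1 2
      have h3 : ((∫ ω, m ω ∂μ) ^ ((1:ℝ)/2) * (∫ ω, M ω ∂μ) ^ ((1:ℝ)/2)) ^ 2
          = (∫ ω, m ω ∂μ) * (∫ ω, M ω ∂μ) := by
        rw [mul_pow, ← Real.rpow_natCast ((∫ ω, m ω ∂μ) ^ ((1:ℝ)/2)) 2,
          ← Real.rpow_natCast ((∫ ω, M ω ∂μ) ^ ((1:ℝ)/2)) 2,
          ← Real.rpow_mul hmI0, ← Real.rpow_mul hMI0]
        norm_num
      rw [h3] at h2
      calc (∫ ω, s ω ∂μ) ^ 2 ≤ (∫ ω, m ω ∂μ) * (∫ ω, M ω ∂μ) := h2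
        _ ≤ (∫ ω, m ω ∂μ) * 2 := by
            exact mul_le_mul_of_nonneg_left hMI2 hmI0
        _ = 2 * ∫ ω, m ω ∂μ := by ring
    -- split ∫ m over D and Dᶜ
    have hmsplit : (∫ ω in D, m ω ∂μ) + (∫ ω in Dᶜ, m ω ∂μ) = ∫ ω, m ω ∂μ :=
      integral_add_compl hDm hmint
    have h4 : ∫ ω in D, m ω ∂μ ≤ ∫ ω in D, f ω ∂μ := by
      refine setIntegral_mono_on hmint.integrableOn hfint.integrableOn hDm ?_
      intro ω _; exact min_le_left _ _
    have h5 : ∫ ω in Dᶜ, m ω ∂μ ≤ ∫ ω in Dᶜ, g ω ∂μ := by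
      refine setIntegral_mono_on hmint.integrableOn hgint.integrableOn hDm.compl ?_
      intro ω _; exact min_le_right _ _
    have hfD0 : 0 ≤ ∫ ω in D, f ω ∂μ := setIntegral_nonneg hDm fun ω _ => hf0 ω
    have hgDc0 : 0 ≤ ∫ ω in Dᶜ, g ω ∂μ := setIntegral_nonneg hDm.compl fun ω _ => hg0 ω
    calc (1 / 2) * min θ (1 - θ) * (∫ ω, s ω ∂μ) ^ 2
        ≤ (1 / 2) * min θ (1 - θ) * (2 * ∫ ω, m ω ∂μ) := by
          exact mul_le_mul_of_nonneg_left hBsq (by positivity)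
      _ = min θ (1 - θ) * ((∫ ω in D, m ω ∂μ) + (∫ ω in Dᶜ, m ω ∂μ)) := by
          rw [hmsplit]; ring
      _ ≤ min θ (1 - θ) * ((∫ ω in D, f ω ∂μ) + (∫ ω in Dᶜ, g ω ∂μ)) := by
          exact mul_le_mul_of_nonneg_left (by linarith) (le_of_lt hminθ)
      _ = min θ (1 - θ) * (∫ ω in D, f ω ∂μ) + min θ (1 - θ) * (∫ ω in Dᶜ, g ω ∂μ) := by ring
      _ ≤ θ * (∫ ω in D, f ω ∂μ) + (1 - θ) * (∫ ω in Dᶜ, g ω ∂μ) := by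
          gcongr <;> [exact min_le_left _ _; exact min_le_right _ _]
  · -- UPPER BOUND
    set c₂ : ℝ := Real.sqrt ((1 - q) / q) with hc₂
    set c₁ : ℝ := Real.sqrt (q / (1 - q)) with hc₁
    have hptD : ∀ ω ∈ D, f ω ≤ c₂ * s ω := by
      intro ω hω
      have hlt : q * f ω < (1 - q) * g ω := hω
      have h1 : f ω * f ω ≤ ((1 - q) / q) * (f ω * g ω) := by
        rw [div_mul_eq_mul_div, le_div_iff₀ hq0]
        nlinarith [hf0 ω]
      calc f ω = Real.sqrt (f ω * f ω) := (Real.sqrt_mul_self (hf0 ω)).symm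
        _ ≤ Real.sqrt (((1 - q) / q) * (f ω * g ω)) := Real.sqrt_le_sqrt h1
        _ = c₂ * s ω := Real.sqrt_mul (by positivity) _
    have hptDc : ∀ ω ∈ Dᶜ, g ω ≤ c₁ * s ω := by
      intro ω hω
      have hle : (1 - q) * g ω ≤ q * f ω := not_lt.mp hω
      have h1 : g ω * g ω ≤ (q / (1 - q)) * (f ω * g ω) := by
        rw [div_mul_eq_mul_div, le_div_iff₀ hq1']
        nlinarith [hg0 ω]
      calc g ω = Real.sqrt (g ω * g ω) := (Real.sqrt_mul_self (hg0 ω)).symm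
        _ ≤ Real.sqrt ((q / (1 - q)) * (f ω * g ω)) := Real.sqrt_le_sqrt h1
        _ = c₁ * s ω := Real.sqrt_mul (by positivity) _
    have hIfD : ∫ ω in D, f ω ∂μ ≤ c₂ * ∫ ω in D, s ω ∂μ := by
      rw [← integral_const_mul]
      exact setIntegral_mono_on hfint.integrableOn
        ((hsint.const_mul c₂).integrableOn) hDm hptD
    have hIgDc : ∫ ω in Dᶜ, g ω ∂μ ≤ c₁ * ∫ ω in Dᶜ, s ω ∂μ := by
      rw [← integral_const_mul]
      exact setIntegral_mono_on hgint.integrableOn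
        ((hsint.const_mul c₁).integrableOn) hDm.compl hptDc
    have hsD0 : 0 ≤ ∫ ω in D, s ω ∂μ := setIntegral_nonneg hDm fun ω _ => hs0 ω
    have hsDc0 : 0 ≤ ∫ ω in Dᶜ, s ω ∂μ := setIntegral_nonneg hDm.compl fun ω _ => hs0 ω
    have hssplit : (∫ ω in D, s ω ∂μ) + (∫ ω in Dᶜ, s ω ∂μ) = ∫ ω, s ω ∂μ :=
      integral_add_compl hDm hsint
    set K : ℝ := max (c₂ * θ) (c₁ * (1 - θ)) with hK
    have step1 : θ * (∫ ω in D, f ω ∂μ) + (1 - θ) * (∫ ω in Dᶜ, g ω ∂μ)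
        ≤ (c₂ * θ) * (∫ ω in D, s ω ∂μ) + (c₁ * (1 - θ)) * (∫ ω in Dᶜ, s ω ∂μ) := by
      have a1 := mul_le_mul_of_nonneg_left hIfD (le_of_lt hθ0)
      have a2 := mul_le_mul_of_nonneg_left hIgDc (by linarith : (0:ℝ) ≤ 1 - θ)
      nlinarith [a1, a2]
    have step2 : (c₂ * θ) * (∫ ω in D, s ω ∂μ) + (c₁ * (1 - θ)) * (∫ ω in Dᶜ, s ω ∂μ)
        ≤ K * (∫ ω in D, s ω ∂μ) + K * (∫ ω in Dᶜ, s ω ∂μ) :=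
      add_le_add (mul_le_mul_of_nonneg_right (le_max_left _ _) hsD0)
        (mul_le_mul_of_nonneg_right (le_max_right _ _) hsDc0)
    have step3 : K * (∫ ω in D, s ω ∂μ) + K * (∫ ω in Dᶜ, s ω ∂μ) = K * ∫ ω, s ω ∂μ := by
      rw [← hssplit]; ring
    linarith
end

section
/- For any binary MMDP M = {M_1, M_2}, any policy π, and any t ∈ ℕ, the strict inequality B(t+1, π) < B(t, π) holds if and only if there exist a history h_t ∈ H_t with P_1^π(h_t)·P_2^π(h_t) > 0 and an action a ∈ A_{h_t(t)} with π_t(a|h_t) > 0 such that δ_1(·|h_t(t), a) ≠ δ_2(·|h_t(t), a). -/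
open Finset Filter

/-- A history of length `t` of an MDP with states `S` and actions `A`:
a sequence of `t+1` states and `t` actions `(s₀, a₀, s₁, …, a_{t-1}, s_t)`. -/
abbrev Hist (S A : Type) (t : ℕ) : Type := (Fin (t + 1) → S) × (Fin t → A)

/-- The last state of a history. -/
def lastState {S A : Type} {t : ℕ} (h : Hist S A t) : S := h.1 (Fin.last t)

/-- The length-`τ` prefix of a history of length `t` (for `τ < t`). -/
def prefixH {S A : Type} {t : ℕ} (h : Hist S A t) (τ : Fin t) : Hist S A τ.val :=
  (fun i => h.1 (Fin.castLE (Nat.succ_le_succ τ.isLt.le) i),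
   fun i => h.2 (Fin.castLE τ.isLt.le i))

/-- A history-dependent randomized policy over the available-action map `act`:
for every time `t` and history `h` of length `t` it gives a probability
distribution over the actions available at the last state of `h`. -/
structure Policy (S A : Type) [Fintype S] [Fintype A] (act : S → Finset A) where
  p : (t : ℕ) → Hist S A t → A → ℝ
  nonneg : ∀ (t : ℕ) (h : Hist S A t) (a : A), 0 ≤ p t h a
  sum_one : ∀ (t : ℕ) (h : Hist S A t), ∑ a ∈ act (lastState h), p t h a = 1
  zero_off : ∀ (t : ℕ) (h : Hist S A t), ∀ a ∉ act (lastState h), p t h a = 0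

/-- The probability `P^π(h)` of a history `h` of length `t` under the transition kernel `δ`
    and (the underlying map `πf` of) a policy, starting from the initial state `init`. -/
noncomputable def histProb {S A : Type} [Fintype S] [Fintype A] [DecidableEq S]
    (init : S) (δ : S → A → S → ℝ)
    (πf : (t : ℕ) → Hist S A t → A → ℝ) (t : ℕ) (h : Hist S A t) : ℝ :=
  (if h.1 0 = init then (1 : ℝ) else 0) *
    ∏ τ : Fin t,
      πf τ.val (prefixH h τ) (h.2 τ) * δ (h.1 τ.castSucc) (h.2 τ) (h.1 τ.succ)

/-- The Bhattacharyya coefficient at step `t` between the history distributions induced by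
the kernels `δ1` and `δ2` under the policy map `πf`:
`B(t,π) = Σ_{h_t} √(P₁^π(h_t)·P₂^π(h_t))`. -/
noncomputable def BC {S A : Type} [Fintype S] [Fintype A] [DecidableEq S]
    (init : S) (δ1 δ2 : S → A → S → ℝ)
    (πf : (t : ℕ) → Hist S A t → A → ℝ) (t : ℕ) : ℝ :=
  ∑ h : Hist S A t,
    Real.sqrt (histProb init δ1 πf t h * histProb init δ2 πf t h)

/-- A binary MMDP: two MDPs sharing the state space `S`, available actions `act`,
and initial state `init`, with transition kernels `δ 0` and `δ 1`. -/
structure BinMMDP (S A : Type) [Fintype S] [Fintype A] where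
  act : S → Finset A
  act_nonempty : ∀ s, (act s).Nonempty
  init : S
  δ : Fin 2 → S → A → S → ℝ
  δ_nonneg : ∀ i s a s', 0 ≤ δ i s a s'
  δ_sum : ∀ i s, ∀ a ∈ act s, ∑ s', δ i s a s' = 1

section Aux

variable {S A : Type} [Fintype S] [Fintype A] [DecidableEq S]

def extH {t : ℕ} (h : Hist S A t) (a : A) (s' : S) : Hist S A (t + 1) :=
  (Fin.snoc h.1 s', Fin.snoc h.2 a)

lemma snoc_castLE' {α : Type} {n m : ℕ} (f : Fin n → α) (x : α)
    (h1 : m ≤ n + 1) (h2 : m ≤ n) (j : Fin m) :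
    (Fin.snoc f x : Fin (n + 1) → α) (Fin.castLE h1 j) = f (Fin.castLE h2 j) := by
  have e : Fin.castLE h1 j = Fin.castSucc (Fin.castLE h2 j) := rfl
  rw [e, Fin.snoc_castSucc]

lemma prefixH_extH_castSucc {t : ℕ} (h : Hist S A t) (a : A) (s' : S) (τ : Fin t) :
    prefixH (extH h a s') τ.castSucc = prefixH h τ := by
  unfold prefixH extH
  refine Prod.ext ?_ ?_ <;> funext j
  · exact snoc_castLE' h.1 s' _ (Nat.succ_le_succ τ.isLt.le) j
  · exact snoc_castLE' h.2 a _ τ.isLt.le j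

lemma prefixH_extH_last {t : ℕ} (h : Hist S A t) (a : A) (s' : S) :
    prefixH (extH h a s') (Fin.last t) = h := by
  unfold prefixH extH
  refine Prod.ext ?_ ?_ <;> funext j
  · exact (snoc_castLE' h.1 s' _ (le_refl (t + 1)) j).trans (congrArg h.1 (Fin.ext rfl))
  · exact (snoc_castLE' h.2 a _ (le_refl t) j).trans (congrArg h.2 (Fin.ext rfl))

lemma histProb_extH (init : S) (δ : S → A → S → ℝ) (πf : (t : ℕ) → Hist S A t → A → ℝ)
    (t : ℕ) (h : Hist S A t) (a : A) (s' : S) :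
    histProb init δ πf (t + 1) (extH h a s')
      = histProb init δ πf t h * (πf t h a * δ (lastState h) a s') := by
  unfold histProb
  rw [Fin.prod_univ_castSucc]
  have h0 : (extH h a s').1 0 = h.1 0 := by
    show (Fin.snoc h.1 s' : Fin (t + 2) → S) 0 = h.1 0
    have e : (0 : Fin (t + 2)) = Fin.castSucc (0 : Fin (t + 1)) := by ext; simp
    rw [e, Fin.snoc_castSucc]
  have hfac : ∀ τ : Fin t,
      πf (τ.castSucc).val (prefixH (extH h a s') τ.castSucc) ((extH h a s').2 τ.castSucc) *
        δ ((extH h a s').1 (τ.castSucc).castSucc) ((extH h a s').2 τ.castSucc)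
          ((extH h a s').1 (τ.castSucc).succ)
      = πf τ.val (prefixH h τ) (h.2 τ) * δ (h.1 τ.castSucc) (h.2 τ) (h.1 τ.succ) := by
    intro τ
    rw [prefixH_extH_castSucc]
    simp only [extH, Fin.succ_castSucc, Fin.snoc_castSucc, Fin.coe_castSucc]
  have hlast :
      πf (Fin.last t).val (prefixH (extH h a s') (Fin.last t)) ((extH h a s').2 (Fin.last t)) *
        δ ((extH h a s').1 (Fin.last t).castSucc) ((extH h a s').2 (Fin.last t))
          ((extH h a s').1 (Fin.last t).succ)
      = πf t h a * δ (lastState h) a s' := by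
    rw [prefixH_extH_last]
    simp only [extH, Fin.snoc_last, Fin.succ_last, Fin.snoc_castSucc, Fin.val_last, lastState]
  rw [Finset.prod_congr rfl (fun τ _ => hfac τ), hlast, h0]
  ring

def histEquiv {t : ℕ} : (Hist S A t × A × S) ≃ Hist S A (t + 1) where
  toFun p := extH p.1 p.2.1 p.2.2
  invFun H := ((Fin.init H.1, Fin.init H.2), (H.2 (Fin.last t), H.1 (Fin.last (t + 1))))
  left_inv p := by
    obtain ⟨h, a, s'⟩ := p
    simp [extH, Fin.init_snoc, Fin.snoc_last]
  right_inv H := by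
    obtain ⟨f, g⟩ := H
    simp [extH, Fin.snoc_init_self]

end Aux

section MainAux

variable {S A : Type} [Fintype S] [Fintype A] [DecidableEq S]

lemma histProb_nonneg (init : S) (δ : S → A → S → ℝ) (πf : (t : ℕ) → Hist S A t → A → ℝ)
    (hπ : ∀ t h a, 0 ≤ πf t h a) (hδ : ∀ s a s', 0 ≤ δ s a s') (t : ℕ) (h : Hist S A t) :
    0 ≤ histProb init δ πf t h := by
  unfold histProb
  apply mul_nonneg
  · split <;> norm_num
  · exact Finset.prod_nonneg fun τ _ => mul_nonneg (hπ _ _ _) (hδ _ _ _)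

lemma sum_pos_iff' {ι : Type*} [Fintype ι] {f : ι → ℝ} (hf : ∀ i, 0 ≤ f i) :
    (0 < ∑ i, f i) ↔ ∃ i, 0 < f i := by
  constructor
  · intro h
    by_contra hc
    push_neg at hc
    have : ∑ i, f i = 0 := Finset.sum_eq_zero fun i _ => le_antisymm (hc i) (hf i)
    linarith
  · rintro ⟨i, hi⟩
    exact Finset.sum_pos' (fun j _ => hf j) ⟨i, Finset.mem_univ i, hi⟩

lemma mul3_pos_iff {x y z : ℝ} (hx : 0 ≤ x) (hy : 0 ≤ y) (hz : 0 ≤ z) :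
    0 < x * y * z ↔ 0 < x ∧ 0 < y ∧ 0 < z := by
  constructor
  · intro h
    refine ⟨hx.lt_of_ne fun e => by simp [← e] at h,
            hy.lt_of_ne fun e => by simp [← e] at h,
            hz.lt_of_ne fun e => by simp [← e] at h⟩
  · rintro ⟨a, b, c⟩
    exact mul_pos (mul_pos a b) c

end MainAux

/-- **Characterization of strict decrease of the Bhattacharyya coefficient.**
For any binary MMDP `M`, any policy `π` and any `t`, `B(t+1,π) < B(t,π)` holds
if and only if there exist a history `h_t` with `P₁^π(h_t)·P₂^π(h_t) > 0` and an
action `a ∈ A_{h_t(t)}` with `π_t(a|h_t) > 0` such that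
`δ₁(·|h_t(t),a) ≠ δ₂(·|h_t(t),a)`. -/
theorem BC_strict_decrease_iff
    {S A : Type} [Fintype S] [Fintype A] [DecidableEq S]
    (M : BinMMDP S A) (π : Policy S A M.act) (t : ℕ) :
    BC M.init (M.δ 0) (M.δ 1) π.p (t + 1) < BC M.init (M.δ 0) (M.δ 1) π.p t
      ↔ ∃ h : Hist S A t,
          0 < histProb M.init (M.δ 0) π.p t h * histProb M.init (M.δ 1) π.p t h ∧
          ∃ a ∈ M.act (lastState h),
            0 < π.p t h a ∧ M.δ 0 (lastState h) a ≠ M.δ 1 (lastState h) a := by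
  classical
  set P1 : Hist S A t → ℝ := fun h => histProb M.init (M.δ 0) π.p t h with hP1
  set P2 : Hist S A t → ℝ := fun h => histProb M.init (M.δ 1) π.p t h with hP2
  have hP1n : ∀ h, 0 ≤ P1 h := fun h =>
    histProb_nonneg _ _ _ π.nonneg (M.δ_nonneg 0) t h
  have hP2n : ∀ h, 0 ≤ P2 h := fun h =>
    histProb_nonneg _ _ _ π.nonneg (M.δ_nonneg 1) t h
  -- D s a : half the squared Hellinger-type distance between the two kernels at (s,a)
  set D : S → A → ℝ := fun s a =>
    (∑ s', (Real.sqrt (M.δ 0 s a s') - Real.sqrt (M.δ 1 s a s')) ^ 2) / 2 with hD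
  have hDn : ∀ s a, 0 ≤ D s a := fun s a => by
    apply div_nonneg _ (by norm_num)
    exact Finset.sum_nonneg fun s' _ => sq_nonneg _
  have hDpos : ∀ s a, (0 < D s a ↔ M.δ 0 s a ≠ M.δ 1 s a) := by
    intro s a
    simp only [hD]
    constructor
    · intro hpos he
      rw [he] at hpos
      simp at hpos
    · intro hne
      apply div_pos _ (by norm_num)
      rw [sum_pos_iff' (fun s' => sq_nonneg _)]
      rw [Function.ne_iff] at hne
      obtain ⟨s', hs'⟩ := hne
      refine ⟨s', ?_⟩
      apply sq_pos_of_ne_zero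
      intro h0
      exact hs' ((Real.sqrt_inj (M.δ_nonneg 0 s a s') (M.δ_nonneg 1 s a s')).mp
        (sub_eq_zero.mp h0))
  -- the per-(h,a) weight
  set F : Hist S A t → A → ℝ := fun h a => Real.sqrt (P1 h * P2 h) * π.p t h a * D (lastState h) a
    with hF
  have hFn : ∀ h a, 0 ≤ F h a := fun h a =>
    mul_nonneg (mul_nonneg (Real.sqrt_nonneg _) (π.nonneg t h a)) (hDn _ _)
  -- expansion of BC (t+1)
  have hBC1 : BC M.init (M.δ 0) (M.δ 1) π.p (t + 1)
      = ∑ h : Hist S A t, ∑ a : A, ∑ s' : S,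
          Real.sqrt (P1 h * P2 h) * π.p t h a *
            Real.sqrt (M.δ 0 (lastState h) a s' * M.δ 1 (lastState h) a s') := by
    unfold BC
    rw [← Equiv.sum_comp (histEquiv (S := S) (A := A) (t := t))]
    rw [Fintype.sum_prod_type]
    refine Finset.sum_congr rfl fun h _ => ?_
    rw [Fintype.sum_prod_type]
    refine Finset.sum_congr rfl fun a _ => ?_
    refine Finset.sum_congr rfl fun s' _ => ?_
    show Real.sqrt (histProb M.init (M.δ 0) π.p (t+1) (extH h a s') *
        histProb M.init (M.δ 1) π.p (t+1) (extH h a s')) = _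
    rw [histProb_extH, histProb_extH]
    have e : P1 h * (π.p t h a * M.δ 0 (lastState h) a s') *
        (P2 h * (π.p t h a * M.δ 1 (lastState h) a s'))
        = (P1 h * P2 h) * ((π.p t h a * π.p t h a) *
            (M.δ 0 (lastState h) a s' * M.δ 1 (lastState h) a s')) := by ring
    rw [show histProb M.init (M.δ 0) π.p t h = P1 h from rfl,
        show histProb M.init (M.δ 1) π.p t h = P2 h from rfl, e,
        Real.sqrt_mul (mul_nonneg (hP1n h) (hP2n h)),
        Real.sqrt_mul (mul_nonneg (π.nonneg t h a) (π.nonneg t h a)),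
        Real.sqrt_mul_self (π.nonneg t h a), mul_assoc]
  -- expansion of BC t
  have hsum1 : ∀ h : Hist S A t, ∑ a : A, π.p t h a = 1 := by
    intro h
    rw [← π.sum_one t h]
    exact (Finset.sum_subset (Finset.subset_univ _)
      (fun a _ ha => π.zero_off t h a ha)).symm
  have hBCt : BC M.init (M.δ 0) (M.δ 1) π.p t
      = ∑ h : Hist S A t, ∑ a : A, Real.sqrt (P1 h * P2 h) * π.p t h a := by
    unfold BC
    refine Finset.sum_congr rfl fun h _ => ?_
    rw [← Finset.mul_sum, hsum1 h, mul_one]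
  -- the key pointwise identity
  have key : ∀ (h : Hist S A t) (a : A),
      Real.sqrt (P1 h * P2 h) * π.p t h a -
        (∑ s' : S, Real.sqrt (P1 h * P2 h) * π.p t h a *
          Real.sqrt (M.δ 0 (lastState h) a s' * M.δ 1 (lastState h) a s')) = F h a := by
    intro h a
    by_cases ha : a ∈ M.act (lastState h)
    · have hexp : ∑ s' : S, (Real.sqrt (M.δ 0 (lastState h) a s')
          - Real.sqrt (M.δ 1 (lastState h) a s')) ^ 2
          = 2 - 2 * ∑ s' : S,
              Real.sqrt (M.δ 0 (lastState h) a s' * M.δ 1 (lastState h) a s') := by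
        have hterm : ∀ s' : S, (Real.sqrt (M.δ 0 (lastState h) a s')
            - Real.sqrt (M.δ 1 (lastState h) a s')) ^ 2
            = M.δ 0 (lastState h) a s' + M.δ 1 (lastState h) a s'
              - 2 * Real.sqrt (M.δ 0 (lastState h) a s' * M.δ 1 (lastState h) a s') := by
          intro s'
          rw [sub_sq, Real.sq_sqrt (M.δ_nonneg 0 _ _ _), Real.sq_sqrt (M.δ_nonneg 1 _ _ _),
              Real.sqrt_mul (M.δ_nonneg 0 _ _ _)]
          ring
        rw [Finset.sum_congr rfl (fun s' _ => hterm s')]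
        rw [Finset.sum_sub_distrib, Finset.sum_add_distrib, M.δ_sum 0 _ a ha,
            M.δ_sum 1 _ a ha, ← Finset.mul_sum]
        norm_num
      rw [hF]
      show _ = Real.sqrt (P1 h * P2 h) * π.p t h a * D (lastState h) a
      rw [hD]
      show _ = Real.sqrt (P1 h * P2 h) * π.p t h a *
        ((∑ s', (Real.sqrt (M.δ 0 (lastState h) a s')
          - Real.sqrt (M.δ 1 (lastState h) a s')) ^ 2) / 2)
      rw [hexp, ← Finset.mul_sum]
      ring
    · rw [π.zero_off t h a ha]
      simp [hF, π.zero_off t h a ha]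
  -- the difference is the double sum of F
  have hdiff : BC M.init (M.δ 0) (M.δ 1) π.p t - BC M.init (M.δ 0) (M.δ 1) π.p (t + 1)
      = ∑ h : Hist S A t, ∑ a : A, F h a := by
    rw [hBCt, hBC1, ← Finset.sum_sub_distrib]
    refine Finset.sum_congr rfl fun h _ => ?_
    rw [← Finset.sum_sub_distrib]
    exact Finset.sum_congr rfl fun a _ => key h a
  -- conclude
  have hiff : BC M.init (M.δ 0) (M.δ 1) π.p (t + 1) < BC M.init (M.δ 0) (M.δ 1) π.p t
      ↔ 0 < ∑ h : Hist S A t, ∑ a : A, F h a := by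
    rw [← hdiff]
    constructor <;> intro <;> linarith
  rw [hiff, sum_pos_iff' (fun h => Finset.sum_nonneg fun a _ => hFn h a)]
  constructor
  · rintro ⟨h, hh⟩
    rw [sum_pos_iff' (fun a => hFn h a)] at hh
    obtain ⟨a, hha⟩ := hh
    rw [hF] at hha
    rw [mul3_pos_iff (Real.sqrt_nonneg _) (π.nonneg t h a) (hDn _ _)] at hha
    obtain ⟨hs, hπa, hDa⟩ := hha
    have hmem : a ∈ M.act (lastState h) := by
      by_contra hmem
      rw [π.zero_off t h a hmem] at hπa
      exact lt_irrefl 0 hπa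
    exact ⟨h, Real.sqrt_pos.mp hs, a, hmem, hπa, (hDpos _ _).mp hDa⟩
  · rintro ⟨h, hP, a, ha, hπa, hne⟩
    refine ⟨h, ?_⟩
    rw [sum_pos_iff' (fun a => hFn h a)]
    refine ⟨a, ?_⟩
    rw [hF]
    exact (mul3_pos_iff (Real.sqrt_nonneg _) (π.nonneg t h a) (hDn _ _)).mpr
      ⟨Real.sqrt_pos.mpr hP, hπa, (hDpos _ _).mpr hne⟩
end

section
/- Let M = {M_1, M_2} be a binary MMDP and S_r ⊆ S its set of revealing states. Given any policy π, let π' be a policy such that for all t and all h_t ∈ H_t: if h_t(t) ∉ S_r then π'_t(·|h_t) = π_t(·|h_t), and if h_t(t) ∈ S_r then π'_t(a|h_t) = 1 for some revealing action a ∈ A_{h_t(t)}. Then B(t, π') ≤ B(t, π) for all t ∈ ℕ, and hence lim_{t→∞} B(t, π') ≤ lim_{t→∞} B(t, π). -/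
open Finset Filter

/-- A state-action pair `(s,a)` of a binary MMDP is revealing if the supports of
`δ₁(·|s,a)` and `δ₂(·|s,a)` are disjoint. -/
def RevealingPair {S A : Type} [Fintype S] [Fintype A] (M : BinMMDP S A)
    (s : S) (a : A) : Prop :=
  ∀ s' : S, ¬(0 < M.δ 0 s a s' ∧ 0 < M.δ 1 s a s')

/-- A state is revealing if some available action at it forms a revealing pair. -/
def RevealingState {S A : Type} [Fintype S] [Fintype A] (M : BinMMDP S A) (s : S) : Prop :=
  ∃ a ∈ M.act s, RevealingPair M s a

/-- **Taking revealing actions at revealing states does not hurt.**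
Let `π` be any policy, and let `π'` be a policy that coincides with `π` on histories whose
last state is not revealing and deterministically takes some revealing action whenever the
last state is revealing.  Then `B(t,π') ≤ B(t,π)` for all `t`, and hence
`lim_{t→∞} B(t,π') ≤ lim_{t→∞} B(t,π)`. -/
theorem BC_le_of_revealing_modification
    {S A : Type} [Fintype S] [Fintype A] [DecidableEq S]
    (M : BinMMDP S A) (π π' : Policy S A M.act)
    (h1 : ∀ (t : ℕ) (h : Hist S A t), ¬ RevealingState M (lastState h) →
      ∀ a : A, π'.p t h a = π.p t h a)
    (h2 : ∀ (t : ℕ) (h : Hist S A t), RevealingState M (lastState h) →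
      ∃ a ∈ M.act (lastState h), RevealingPair M (lastState h) a ∧ π'.p t h a = 1) :
    (∀ t : ℕ, BC M.init (M.δ 0) (M.δ 1) π'.p t ≤ BC M.init (M.δ 0) (M.δ 1) π.p t)
      ∧ ∀ L L' : ℝ,
          Tendsto (fun t => BC M.init (M.δ 0) (M.δ 1) π'.p t) atTop (nhds L') →
          Tendsto (fun t => BC M.init (M.δ 0) (M.δ 1) π.p t) atTop (nhds L) →
          L' ≤ L := by
  classical
  have key : ∀ t : ℕ, BC M.init (M.δ 0) (M.δ 1) π'.p t ≤ BC M.init (M.δ 0) (M.δ 1) π.p t := by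
    intro t
    apply Finset.sum_le_sum
    intro h _
    by_cases hrev : ∃ τ : Fin t, RevealingState M (h.1 τ.castSucc)
    · obtain ⟨τ0, hτ0⟩ := hrev
      have hlast : lastState (prefixH h τ0) = h.1 τ0.castSucc := rfl
      obtain ⟨a, haA, hrp, hp1⟩ := h2 τ0.val (prefixH h τ0) (by rw [hlast]; exact hτ0)
      have hz : histProb M.init (M.δ 0) π'.p t h * histProb M.init (M.δ 1) π'.p t h = 0 := by
        by_cases hae : h.2 τ0 = a
        · have hnb := hrp (h.1 τ0.succ)
          have hd0 : M.δ 0 (h.1 τ0.castSucc) (h.2 τ0) (h.1 τ0.succ) = 0 ∨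
              M.δ 1 (h.1 τ0.castSucc) (h.2 τ0) (h.1 τ0.succ) = 0 := by
            rw [hae, ← hlast]
            rcases lt_or_eq_of_le (M.δ_nonneg 0 (lastState (prefixH h τ0)) a (h.1 τ0.succ)) with h0 | h0
            · rcases lt_or_eq_of_le (M.δ_nonneg 1 (lastState (prefixH h τ0)) a (h.1 τ0.succ)) with h1' | h1'
              · exact absurd ⟨h0, h1'⟩ hnb
              · exact Or.inr h1'.symm
            · exact Or.inl h0.symm
          rcases hd0 with hd | hd
          · have : histProb M.init (M.δ 0) π'.p t h = 0 := by
              unfold histProb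
              rw [Finset.prod_eq_zero (Finset.mem_univ τ0) (by rw [hd, mul_zero]), mul_zero]
            rw [this, zero_mul]
          · have : histProb M.init (M.δ 1) π'.p t h = 0 := by
              unfold histProb
              rw [Finset.prod_eq_zero (Finset.mem_univ τ0) (by rw [hd, mul_zero]), mul_zero]
            rw [this, mul_zero]
        · have hp0 : π'.p τ0.val (prefixH h τ0) (h.2 τ0) = 0 := by
            by_cases hmem : h.2 τ0 ∈ M.act (lastState (prefixH h τ0))
            · have herase := Finset.add_sum_erase (M.act (lastState (prefixH h τ0)))
                (π'.p τ0.val (prefixH h τ0)) haA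
              have hsum := π'.sum_one τ0.val (prefixH h τ0)
              have h0 : ∑ x ∈ (M.act (lastState (prefixH h τ0))).erase a,
                  π'.p τ0.val (prefixH h τ0) x = 0 := by
                rw [hsum, hp1] at herase; linarith
              have hall := (Finset.sum_eq_zero_iff_of_nonneg
                (fun x _ => π'.nonneg τ0.val (prefixH h τ0) x)).mp h0
              exact hall _ (Finset.mem_erase.mpr ⟨hae, hmem⟩)
            · exact π'.zero_off _ _ _ hmem
          have : histProb M.init (M.δ 0) π'.p t h = 0 := by
            unfold histProb
            rw [Finset.prod_eq_zero (Finset.mem_univ τ0) (by rw [hp0, zero_mul]), mul_zero]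
          rw [this, zero_mul]
      rw [hz, Real.sqrt_zero]
      exact Real.sqrt_nonneg _
    · push_neg at hrev
      have heq : ∀ δ : S → A → S → ℝ,
          histProb M.init δ π'.p t h = histProb M.init δ π.p t h := by
        intro δ
        unfold histProb
        congr 1
        apply Finset.prod_congr rfl
        intro τ _
        rw [h1 τ.val (prefixH h τ)
          (by rw [show lastState (prefixH h τ) = h.1 τ.castSucc from rfl]; exact hrev τ)]
      rw [heq, heq]
  exact ⟨key, fun L L' hT' hT => le_of_tendsto_of_tendsto' hT' hT key⟩
end

section
/- Let W be an n×n real matrix with nonnegative entries whose row sums are all at most 1, let x ∈ ℝ^n, and let 𝟙 denote the all-ones vector in ℝ^n. If lim_{t→∞} xᵀ Wᵗ 𝟙 = 0, then there exist c > 0 and λ ∈ (0,1) such that |xᵀ Wᵗ 𝟙| ≤ c·λᵗ for all t ∈ ℕ. -/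
open Filter

/-- Let `W` be a nonnegative square real matrix whose row sums are at most `1`, and
let `x` be a real vector.  If `xᵀ Wᵗ 𝟙 → 0` as `t → ∞`, then the convergence is
exponentially fast: there are `c > 0` and `0 < λ < 1` with `|xᵀ Wᵗ 𝟙| ≤ c·λᵗ` for all `t`. -/
theorem substochastic_matrix_exponential_decay
    {n : ℕ} (W : Matrix (Fin n) (Fin n) ℝ)
    (hW : ∀ i j, 0 ≤ W i j) (hrow : ∀ i, ∑ j, W i j ≤ 1)
    (x : Fin n → ℝ)
    (h : Tendsto (fun t : ℕ => dotProduct x ((W ^ t).mulVec (fun _ => 1)))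
      atTop (nhds 0)) :
    ∃ c > 0, ∃ l : ℝ, 0 < l ∧ l < 1 ∧
      ∀ t : ℕ, |dotProduct x ((W ^ t).mulVec (fun _ => 1))| ≤ c * l ^ t := by
  classical
  set v : ℕ → Fin n → ℝ := fun t => (W ^ t).mulVec (fun _ => 1) with hv
  -- powers of W are entrywise nonnegative
  have hWpow : ∀ t i j, 0 ≤ (W ^ t) i j := by
    intro t
    induction t with
    | zero => intro i j; simp [Matrix.one_apply]; positivity
    | succ t ih =>
      intro i j
      rw [pow_succ, Matrix.mul_apply]
      exact Finset.sum_nonneg fun k _ => mul_nonneg (ih i k) (hW k j)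
  have hvsucc : ∀ t, v (t + 1) = W.mulVec (v t) := by
    intro t
    simp only [hv, pow_succ', Matrix.mulVec_mulVec]
  -- v is nonnegative
  have h0v : ∀ t i, 0 ≤ v t i := by
    intro t i
    show 0 ≤ ∑ j, (W ^ t) i j * 1
    exact Finset.sum_nonneg fun j _ => mul_nonneg (hWpow t i j) zero_le_one
  -- v t ≤ 1
  have hv1 : ∀ t i, v t i ≤ 1 := by
    intro t
    induction t with
    | zero => intro i; simp [hv, Matrix.mulVec, dotProduct, Matrix.one_apply]
    | succ t ih =>
      intro i
      rw [hvsucc]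
      calc W.mulVec (v t) i = ∑ j, W i j * v t j := rfl
        _ ≤ ∑ j, W i j * 1 := by
            refine Finset.sum_le_sum fun j _ => mul_le_mul_of_nonneg_left (ih j) (hW i j)
        _ ≤ 1 := by simpa using hrow i
  -- W action is monotone
  have hWmono : ∀ (y z : Fin n → ℝ), (∀ j, y j ≤ z j) →
      ∀ i, W.mulVec y i ≤ W.mulVec z i := by
    intro y z hyz i
    show ∑ j, W i j * y j ≤ ∑ j, W i j * z j
    exact Finset.sum_le_sum fun j _ => mul_le_mul_of_nonneg_left (hyz j) (hW i j)
  -- v is antitone entrywise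
  have hanti1 : ∀ t i, v (t + 1) i ≤ v t i := by
    intro t
    induction t with
    | zero =>
      intro i
      rw [hvsucc]
      calc W.mulVec (v 0) i ≤ W.mulVec (fun _ => 1) i :=
            hWmono _ _ (fun j => hv1 0 j) i
        _ ≤ 1 := by simpa [Matrix.mulVec, dotProduct] using hrow i
        _ = v 0 i := by simp [hv, Matrix.mulVec, dotProduct, Matrix.one_apply]
    | succ t ih =>
      intro i
      have h' := hWmono _ _ ih i
      rw [← hvsucc t, ← hvsucc (t + 1)] at h'
      exact h'
  have hanti : ∀ i, Antitone fun t => v t i := fun i =>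
    antitone_nat_of_succ_le fun t => hanti1 t i
  -- the limit L
  have hbdd : ∀ i, BddBelow (Set.range fun t => v t i) := by
    intro i
    exact ⟨0, fun y ⟨t, ht⟩ => ht ▸ h0v t i⟩
  set L : Fin n → ℝ := fun i => ⨅ t, v t i with hLdef
  have hLle : ∀ t i, L i ≤ v t i := fun t i => ciInf_le (hbdd i) t
  have hL0 : ∀ i, 0 ≤ L i := fun i => le_ciInf fun t => h0v t i
  have hLtend : ∀ i, Tendsto (fun t => v t i) atTop (nhds (L i)) := fun i =>
    tendsto_atTop_ciInf (hanti i) (hbdd i)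
  -- W L = L
  have hWL : ∀ i, W.mulVec L i = L i := by
    intro i
    have h1 : Tendsto (fun t => v (t + 1) i) atTop (nhds (L i)) :=
      (hLtend i).comp (tendsto_add_atTop_nat 1)
    have h2 : Tendsto (fun t => W.mulVec (v t) i) atTop (nhds (W.mulVec L i)) := by
      show Tendsto (fun t => ∑ j, W i j * v t j) atTop (nhds (∑ j, W i j * L j))
      exact tendsto_finset_sum _ fun j _ => (hLtend j).const_mul _
    have h3 : (fun t => v (t + 1) i) = fun t => W.mulVec (v t) i := by
      funext t; rw [hvsucc]
    rw [h3] at h1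
    exact tendsto_nhds_unique h2 h1
  -- x ⬝ L = 0
  have hxL : dotProduct x L = 0 := by
    have h2 : Tendsto (fun t => dotProduct x (v t)) atTop
        (nhds (dotProduct x L)) := by
      show Tendsto (fun t => ∑ j, x j * v t j) atTop (nhds (∑ j, x j * L j))
      exact tendsto_finset_sum _ fun j _ => (hLtend j).const_mul _
    exact tendsto_nhds_unique h2 h
  -- the difference u
  set u : ℕ → Fin n → ℝ := fun t i => v t i - L i with hu
  have hu0 : ∀ t i, 0 ≤ u t i := fun t i => sub_nonneg.2 (hLle t i)
  have huanti : ∀ i, Antitone fun t => u t i := fun i s t hst =>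
    sub_le_sub_right (hanti i hst) _
  have hu01 : ∀ i, u 0 i ≤ 1 := by
    intro i
    have e : v 0 i - L i ≤ v 0 i := sub_le_self _ (hL0 i)
    exact le_trans e (hv1 0 i)
  have hustep : ∀ t i, u (t + 1) i = W.mulVec (u t) i := by
    intro t i
    have e : W.mulVec (u t) = W.mulVec (v t) - W.mulVec L := by
      rw [← Matrix.mulVec_sub]; rfl
    rw [e]
    show v (t + 1) i - L i = (W.mulVec (v t)) i - (W.mulVec L) i
    rw [hvsucc, hWL i]
  have hupow : ∀ t s i, u (t + s) i = (W ^ t).mulVec (u s) i := by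
    intro t
    induction t with
    | zero => intro s i; simp [Matrix.one_mulVec]
    | succ t ih =>
      intro s i
      have e1 : t + 1 + s = (t + s) + 1 := by ring
      rw [e1, hustep (t + s) i]
      have e2 : u (t + s) = (W ^ t).mulVec (u s) := funext fun j => ih s j
      rw [e2, Matrix.mulVec_mulVec, ← pow_succ']
  -- find T with u T ≤ u 0 / 2
  have hTex : ∀ᶠ t in atTop, ∀ i, u t i ≤ u 0 i / 2 := by
    rw [eventually_all]
    intro i
    rcases eq_or_lt_of_le (hu0 0 i) with h0 | h0
    · refine Eventually.of_forall fun t => ?_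
      have h1 : u t i ≤ u 0 i := huanti i (Nat.zero_le t)
      rw [← h0] at h1 ⊢
      calc u t i ≤ 0 := h1
        _ ≤ 0 / 2 := by norm_num
    · have htend : Tendsto (fun t => u t i) atTop (nhds 0) := by
        have := (hLtend i).sub_const (L i)
        simpa using this
      have hlt : ∀ᶠ t in atTop, u t i < u 0 i / 2 :=
        htend.eventually (gt_mem_nhds (half_pos h0))
      exact hlt.mono fun t ht => le_of_lt ht
  obtain ⟨T₀, hT₀⟩ := eventually_atTop.1 hTex
  set T : ℕ := max T₀ 1 with hTdef
  have hT1 : 1 ≤ T := le_max_right _ _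
  have hTle : ∀ i, u T i ≤ u 0 i / 2 := hT₀ T (le_max_left _ _)
  -- geometric decay along multiples of T
  have hgeo : ∀ k i, u (k * T) i ≤ (1 / 2) ^ k * u 0 i := by
    intro k
    induction k with
    | zero => intro i; simp
    | succ k ih =>
      intro i
      have e : (k + 1) * T = k * T + T := by ring
      rw [e, hupow (k * T) T i]
      calc (W ^ (k * T)).mulVec (u T) i = ∑ j, (W ^ (k * T)) i j * u T j := rfl
        _ ≤ ∑ j, (W ^ (k * T)) i j * (u 0 j / 2) :=
            Finset.sum_le_sum fun j _ =>
              mul_le_mul_of_nonneg_left (hTle j) (hWpow _ i j)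
        _ = (1 / 2) * ∑ j, (W ^ (k * T)) i j * u 0 j := by
            rw [Finset.mul_sum]
            exact Finset.sum_congr rfl fun j _ => by ring
        _ = (1 / 2) * u (k * T) i := by
            have e3 : u (k * T) i = ∑ j, (W ^ (k * T)) i j * u 0 j := hupow (k * T) 0 i
            rw [e3]
        _ ≤ (1 / 2) * ((1 / 2) ^ k * u 0 i) := by
            have := ih i
            linarith
        _ = (1 / 2) ^ (k + 1) * u 0 i := by ring
  -- the decay rate
  set l : ℝ := (1 / 2 : ℝ) ^ ((T : ℝ)⁻¹) with hldef
  have hTpos : (0 : ℝ) < T := by exact_mod_cast hT1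
  have hl0 : 0 < l := Real.rpow_pos_of_pos (by norm_num) _
  have hl1 : l < 1 := Real.rpow_lt_one (by norm_num) (by norm_num) (by positivity)
  set M : ℝ := ∑ i, |x i| with hMdef
  have hM0 : 0 ≤ M := Finset.sum_nonneg fun i _ => abs_nonneg _
  refine ⟨2 * M + 1, by positivity, l, hl0, hl1, fun t => ?_⟩
  set k : ℕ := t / T with hkdef
  -- bound the dot product by M * (1/2)^k
  have hft : dotProduct x (v t) = dotProduct x (u t) := by
    have e : dotProduct x (v t) - dotProduct x L
        = dotProduct x (u t) := by
      rw [← dotProduct_sub]; rfl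
    rw [← e, hxL, sub_zero]
  have hut : ∀ i, u t i ≤ (1 / 2) ^ k * u 0 i := fun i =>
    le_trans (huanti i (Nat.div_mul_le_self t T)) (hgeo k i)
  have hbound : |dotProduct x (v t)| ≤ M * (1 / 2) ^ k := by
    rw [hft]
    calc |dotProduct x (u t)| ≤ ∑ i, |x i * u t i| :=
          Finset.abs_sum_le_sum_abs _ _
      _ = ∑ i, |x i| * u t i := by
          exact Finset.sum_congr rfl fun i _ => by rw [abs_mul, abs_of_nonneg (hu0 t i)]
      _ ≤ ∑ i, |x i| * ((1 / 2) ^ k * 1) := by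
          refine Finset.sum_le_sum fun i _ => mul_le_mul_of_nonneg_left ?_ (abs_nonneg _)
          calc u t i ≤ (1 / 2) ^ k * u 0 i := hut i
            _ ≤ (1 / 2) ^ k * 1 := by
                have h2 : (0 : ℝ) ≤ (1 / 2 : ℝ) ^ k := by positivity
                exact mul_le_mul_of_nonneg_left (hu01 i) h2
      _ = M * (1 / 2) ^ k := by rw [← Finset.sum_mul]; ring
  -- compare (1/2)^k with l^t
  have hlt : ((1 / 2 : ℝ)) ^ k ≤ 2 * l ^ t := by
    have hlpow : l ^ t = (1 / 2 : ℝ) ^ ((T : ℝ)⁻¹ * t) := by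
      rw [hldef, ← Real.rpow_natCast ((1 / 2 : ℝ) ^ ((T : ℝ)⁻¹)) t,
        ← Real.rpow_mul (by norm_num)]
    have hkt : (T : ℝ)⁻¹ * t ≤ (k : ℝ) + 1 := by
      have h1 : t < (k + 1) * T := by
        have e := Nat.div_add_mod t T
        have hm : t % T < T := Nat.mod_lt t (by omega)
        calc t = T * k + t % T := by rw [hkdef]; omega
          _ < T * k + T := by omega
          _ = (k + 1) * T := by ring
      have h2 : (t : ℝ) < ((k : ℝ) + 1) * T := by exact_mod_cast h1
      rw [inv_mul_le_iff₀ hTpos]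
      nlinarith
    have h3 : (1 / 2 : ℝ) ^ ((k : ℝ) + 1) ≤ (1 / 2 : ℝ) ^ ((T : ℝ)⁻¹ * t) :=
      Real.rpow_le_rpow_of_exponent_ge (by norm_num) (by norm_num) hkt
    have h4 : (1 / 2 : ℝ) ^ ((k : ℝ) + 1) = (1 / 2 : ℝ) ^ (k + 1) := by
      rw [← Real.rpow_natCast (1 / 2 : ℝ) (k + 1)]
      norm_num
    rw [hlpow]
    calc (1 / 2 : ℝ) ^ k = 2 * (1 / 2 : ℝ) ^ (k + 1) := by ring
      _ = 2 * (1 / 2 : ℝ) ^ ((k : ℝ) + 1) := by rw [h4]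
      _ ≤ 2 * (1 / 2 : ℝ) ^ ((T : ℝ)⁻¹ * t) := by linarith
  have hlt0 : (0 : ℝ) ≤ l ^ t := le_of_lt (pow_pos hl0 t)
  calc |dotProduct x (v t)| ≤ M * (1 / 2) ^ k := hbound
    _ ≤ M * (2 * l ^ t) := mul_le_mul_of_nonneg_left hlt hM0
    _ ≤ (2 * M + 1) * l ^ t := by nlinarith
end

section
/- Let M = {M_1, M_2} be a binary MMDP and π a stationary policy. Define the matrix W ∈ ℝ^{|S|×|S|} by W_{ij} = Σ_{a ∈ A_i} π(a|i)·√(δ_1(j|i,a)·δ_2(j|i,a)) for states i, j ∈ S. Then for all t ∈ ℕ, the Bhattacharyya coefficient satisfies B(t, π) = e_{s_init}ᵀ Wᵗ 𝟙, where e_{s_init} is the standard basis vector indexed by s_init and 𝟙 is the all-ones vector. -/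
open Finset Filter

/-- A stationary (Markovian, time-independent) randomized policy: a distribution over the
available actions at each state. -/
structure StatPolicy (S A : Type) [Fintype S] [Fintype A] (act : S → Finset A) where
  p : S → A → ℝ
  nonneg : ∀ s a, 0 ≤ p s a
  sum_one : ∀ s, ∑ a ∈ act s, p s a = 1
  zero_off : ∀ s, ∀ a ∉ act s, p s a = 0

/-- The history-dependent policy map induced by a stationary policy: it acts according to
the distribution attached to the last state of the history. -/
def StatPolicy.lift {S A : Type} [Fintype S] [Fintype A] {act : S → Finset A}
    (σ : StatPolicy S A act) : (t : ℕ) → Hist S A t → A → ℝ :=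
  fun _ h a => σ.p (lastState h) a

lemma sqrt_prod' {ι : Type*} (s : Finset ι) (f : ι → ℝ) (hf : ∀ i ∈ s, 0 ≤ f i) :
    Real.sqrt (∏ i ∈ s, f i) = ∏ i ∈ s, Real.sqrt (f i) := by
  induction s using Finset.cons_induction with
  | empty => simp
  | cons a s ha ih =>
    rw [Finset.prod_cons, Finset.prod_cons, Real.sqrt_mul (hf a (Finset.mem_cons_self a s)),
      ih (fun i hi => hf i (Finset.mem_cons_of_mem hi))]

lemma pathSum_eq {S : Type} [Fintype S] [DecidableEq S] (W : Matrix S S ℝ) :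
    ∀ (t : ℕ) (init : S),
      (∑ f : Fin (t + 1) → S, (if f 0 = init then (1:ℝ) else 0) *
          ∏ τ : Fin t, W (f τ.castSucc) (f τ.succ))
        = ((W ^ t).mulVec (fun _ => 1)) init := by
  intro t
  induction t with
  | zero =>
    intro init
    rw [Fintype.sum_equiv (Equiv.funUnique (Fin 1) S) _
      (fun s => if s = init then (1:ℝ) else 0) (fun f => by simp [Equiv.funUnique])]
    simp [Matrix.mulVec, dotProduct, Matrix.one_apply]
  | succ t ih =>
    intro init
    rw [Fintype.sum_equiv ((Fin.consEquiv (fun _ : Fin (t+2) => S)).symm) _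
      (fun p : S × (Fin (t+1) → S) => (if p.1 = init then (1:ℝ) else 0) *
        (W p.1 (p.2 0) * ∏ τ : Fin t, W (p.2 τ.castSucc) (p.2 τ.succ)))]
    · rw [Fintype.sum_prod_type]
      rw [Finset.sum_eq_single init]
      · simp only [if_pos rfl, if_true, one_mul]
        have key : ∀ g : Fin (t+1) → S,
            W init (g 0) * ∏ τ : Fin t, W (g τ.castSucc) (g τ.succ)
            = ∑ j : S, W init j * ((if g 0 = j then (1:ℝ) else 0) *
                ∏ τ : Fin t, W (g τ.castSucc) (g τ.succ)) := by
          intro g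
          rw [Finset.sum_eq_single (g 0)]
          · simp
          · intro j _ hj
            simp [Ne.symm hj]
          · intro h; exact absurd (Finset.mem_univ _) h
        simp_rw [key]
        rw [Finset.sum_comm]
        have : ∀ j : S, (∑ g : Fin (t+1) → S, W init j * ((if g 0 = j then (1:ℝ) else 0) *
            ∏ τ : Fin t, W (g τ.castSucc) (g τ.succ)))
            = W init j * ((W ^ t).mulVec (fun _ => 1)) j := by
          intro j
          rw [← Finset.mul_sum, ih j]
        simp_rw [this]
        rw [pow_succ']
        rw [← Matrix.mulVec_mulVec]
        simp [Matrix.mulVec, dotProduct]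
      · intro b _ hb; simp [hb]
      · intro h; exact absurd (Finset.mem_univ _) h
    · intro f
      simp only [Fin.consEquiv_symm_apply]
      rw [Fin.prod_univ_succ]
      simp [Fin.tail]

/-- **Computation of the Bhattacharyya coefficient via matrix powers.**
For a binary MMDP `M` and a stationary policy `σ`, define the matrix `W` by
`W_{ij} = Σ_{a ∈ A_i} σ(a|i)·√(δ₁(j|i,a)·δ₂(j|i,a))`.  Then for all `t`,
`B(t,σ) = e_{s_init}ᵀ Wᵗ 𝟙`. -/
theorem BC_eq_matrix_power
    {S A : Type} [Fintype S] [Fintype A] [DecidableEq S]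
    (M : BinMMDP S A) (σ : StatPolicy S A M.act) (t : ℕ) :
    BC M.init (M.δ 0) (M.δ 1) σ.lift t
      = dotProduct (Pi.single M.init 1)
          (((Matrix.of fun i j : S =>
              ∑ a ∈ M.act i, σ.p i a * Real.sqrt (M.δ 0 i a j * M.δ 1 i a j)) ^ t).mulVec
            (fun _ => 1)) := by
  set W : Matrix S S ℝ := Matrix.of fun i j : S =>
      ∑ a ∈ M.act i, σ.p i a * Real.sqrt (M.δ 0 i a j * M.δ 1 i a j) with hW
  have hlast : ∀ (h : Hist S A t) (τ : Fin t),
      lastState (prefixH h τ) = h.1 τ.castSucc := fun h τ => rfl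
  have point : ∀ h : Hist S A t,
      Real.sqrt (histProb M.init (M.δ 0) σ.lift t h * histProb M.init (M.δ 1) σ.lift t h)
      = (if h.1 0 = M.init then (1:ℝ) else 0) *
          ∏ τ : Fin t, σ.p (h.1 τ.castSucc) (h.2 τ) *
            Real.sqrt (M.δ 0 (h.1 τ.castSucc) (h.2 τ) (h.1 τ.succ)
              * M.δ 1 (h.1 τ.castSucc) (h.2 τ) (h.1 τ.succ)) := by
    intro h
    unfold histProb StatPolicy.lift
    simp only [hlast]
    by_cases h0 : h.1 0 = M.init
    · simp only [h0, if_pos rfl, if_true, one_mul]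
      rw [← Finset.prod_mul_distrib]
      rw [sqrt_prod' _ _ (fun τ _ => by
        have := σ.nonneg (h.1 τ.castSucc) (h.2 τ)
        have := M.δ_nonneg 0 (h.1 τ.castSucc) (h.2 τ) (h.1 τ.succ)
        have := M.δ_nonneg 1 (h.1 τ.castSucc) (h.2 τ) (h.1 τ.succ)
        positivity)]
      refine Finset.prod_congr rfl (fun τ _ => ?_)
      set p := σ.p (h.1 τ.castSucc) (h.2 τ)
      set d0 := M.δ 0 (h.1 τ.castSucc) (h.2 τ) (h.1 τ.succ)
      set d1 := M.δ 1 (h.1 τ.castSucc) (h.2 τ) (h.1 τ.succ)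
      have : (p * d0) * (p * d1) = (p * p) * (d0 * d1) := by ring
      rw [this, Real.sqrt_mul (mul_self_nonneg p), Real.sqrt_mul_self (σ.nonneg _ _)]
    · simp [h0]
  unfold BC
  simp_rw [point]
  rw [Fintype.sum_prod_type]
  have inner : ∀ f : Fin (t+1) → S,
      (∑ a : Fin t → A, (if f 0 = M.init then (1:ℝ) else 0) *
        ∏ τ : Fin t, σ.p (f τ.castSucc) (a τ) *
          Real.sqrt (M.δ 0 (f τ.castSucc) (a τ) (f τ.succ)
            * M.δ 1 (f τ.castSucc) (a τ) (f τ.succ)))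
      = (if f 0 = M.init then (1:ℝ) else 0) *
          ∏ τ : Fin t, W (f τ.castSucc) (f τ.succ) := by
    intro f
    rw [← Finset.mul_sum]
    congr 1
    have : ∀ τ : Fin t, W (f τ.castSucc) (f τ.succ)
        = ∑ b : A, σ.p (f τ.castSucc) b *
            Real.sqrt (M.δ 0 (f τ.castSucc) b (f τ.succ)
              * M.δ 1 (f τ.castSucc) b (f τ.succ)) := by
      intro τ
      rw [hW]
      simp only [Matrix.of_apply]
      exact Finset.sum_subset (Finset.subset_univ _)
        (fun b _ hb => by simp [σ.zero_off _ b hb])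
    rw [Finset.prod_congr rfl (fun τ _ => this τ), Finset.prod_univ_sum]
    simp
  simp_rw [inner]
  rw [pathSum_eq W t M.init]
  simp [dotProduct, Pi.single_apply]
end

section
/- Let M = {M_1, M_2} be a binary MMDP and π a stationary policy, and define W ∈ ℝ^{|S|×|S|} by W_{ij} = Σ_{a ∈ A_i} π(a|i)·√(δ_1(j|i,a)·δ_2(j|i,a)). Then for every state s ∈ S and every t ∈ ℕ, e_{s_init}ᵀ Wᵗ e_s = Σ_{h_t ∈ H_t : h_t(t) = s} √(P_1^π(h_t)·P_2^π(h_t)), where e_s denotes the standard basis vector indexed by s. -/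
open Finset Filter

lemma pathSum {S : Type} [Fintype S] [DecidableEq S] (W : Matrix S S ℝ) (t : ℕ) (i j : S) :
    (W ^ t) i j = ∑ f : Fin (t + 1) → S,
      (if f 0 = i ∧ f (Fin.last t) = j then
        ∏ τ : Fin t, W (f τ.castSucc) (f τ.succ) else 0) := by
  induction t generalizing j with
  | zero =>
    rw [← (Equiv.funUnique (Fin 1) S).symm.sum_comp]
    simp only [pow_zero, Matrix.one_apply, Equiv.funUnique_symm_apply]
    by_cases hij : i = j
    · subst hij
      simp
    · simp only [if_neg hij]
      rw [Finset.sum_eq_zero]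
      intro x _
      rw [if_neg]
      rintro ⟨rfl, rfl⟩
      exact hij rfl
  | succ t ih =>
    have key : ∀ j', (W ^ (t + 1)) i j'
        = ∑ g : Fin (t + 1) → S,
            (if g 0 = i then
              (∏ τ : Fin t, W (g τ.castSucc) (g τ.succ)) * W (g (Fin.last t)) j' else 0) := by
      intro j'
      rw [pow_succ, Matrix.mul_apply]
      simp only [ih, Finset.sum_mul]
      rw [Finset.sum_comm]
      refine Finset.sum_congr rfl fun g _ => ?_
      by_cases h0 : g 0 = i
      · simp only [h0, true_and, ite_mul, zero_mul]
        rw [Finset.sum_ite_eq Finset.univ (g (Fin.last t))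
          (fun x => (∏ τ : Fin t, W (g τ.castSucc) (g τ.succ)) * W x j')]
        simp
      · simp [h0]
    rw [key j]
    rw [← (Fin.snocEquiv (fun _ : Fin (t + 2) => S)).sum_comp]
    rw [Fintype.sum_prod_type]
    rw [Finset.sum_comm]
    refine Finset.sum_congr rfl fun g _ => ?_
    have h0 : ∀ x : S, (Fin.snocEquiv (fun _ : Fin (t + 2) => S) (x, g)) 0 = g 0 := by
      intro x
      show (Fin.snoc g x : Fin (t + 2) → S) ((0 : Fin (t + 1)).castSucc) = g 0
      rw [Fin.snoc_castSucc]
    have hlast : ∀ x : S,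
        (Fin.snocEquiv (fun _ : Fin (t + 2) => S) (x, g)) (Fin.last (t + 1)) = x := by
      intro x
      show (Fin.snoc g x : Fin (t + 2) → S) (Fin.last (t + 1)) = x
      rw [Fin.snoc_last]
    have hprod : ∀ x : S,
        (∏ τ : Fin (t + 1), W ((Fin.snocEquiv (fun _ : Fin (t + 2) => S) (x, g)) τ.castSucc)
            ((Fin.snocEquiv (fun _ : Fin (t + 2) => S) (x, g)) τ.succ))
        = (∏ τ : Fin t, W (g τ.castSucc) (g τ.succ)) * W (g (Fin.last t)) x := by
      intro x
      rw [Fin.prod_univ_castSucc]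
      congr 1
      · refine Finset.prod_congr rfl fun τ _ => ?_
        congr 1
        · show (Fin.snoc g x : Fin (t + 2) → S) ((τ.castSucc).castSucc) = g τ.castSucc
          rw [Fin.snoc_castSucc]
        · show (Fin.snoc g x : Fin (t + 2) → S) ((τ.castSucc).succ) = g τ.succ
          rw [Fin.succ_castSucc, Fin.snoc_castSucc]
      · congr 1
        · show (Fin.snoc g x : Fin (t + 2) → S) ((Fin.last t).castSucc) = g (Fin.last t)
          rw [Fin.snoc_castSucc]
        · show (Fin.snoc g x : Fin (t + 2) → S) ((Fin.last t).succ) = x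
          rw [Fin.succ_last, Fin.snoc_last]
    have hterm : ∀ x : S,
        (if (Fin.snocEquiv (fun _ : Fin (t + 2) => S) (x, g)) 0 = i ∧
            (Fin.snocEquiv (fun _ : Fin (t + 2) => S) (x, g)) (Fin.last (t + 1)) = j then
          ∏ τ : Fin (t + 1), W ((Fin.snocEquiv (fun _ : Fin (t + 2) => S) (x, g)) τ.castSucc)
            ((Fin.snocEquiv (fun _ : Fin (t + 2) => S) (x, g)) τ.succ) else 0)
        = (if g 0 = i ∧ x = j then
            (∏ τ : Fin t, W (g τ.castSucc) (g τ.succ)) * W (g (Fin.last t)) x else 0) := by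
      intro x
      rw [h0 x, hlast x, hprod x]
    rw [Finset.sum_congr rfl fun x _ => hterm x]
    by_cases h0' : g 0 = i
    · simp only [h0', true_and, if_pos]
      rw [Finset.sum_ite_eq' Finset.univ j
        (fun x => (∏ τ : Fin t, W (g τ.castSucc) (g τ.succ)) * W (g (Fin.last t)) x)]
      simp
    · simp [h0']

lemma sqrt_hist {S A : Type} [Fintype S] [Fintype A] [DecidableEq S]
    (M : BinMMDP S A) (σ : StatPolicy S A M.act) (t : ℕ) (h : Hist S A t) :
    Real.sqrt (histProb M.init (M.δ 0) σ.lift t h * histProb M.init (M.δ 1) σ.lift t h)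
      = (if h.1 0 = M.init then (1 : ℝ) else 0) *
          ∏ τ : Fin t, σ.p (h.1 τ.castSucc) (h.2 τ) *
            Real.sqrt (M.δ 0 (h.1 τ.castSucc) (h.2 τ) (h.1 τ.succ) *
              M.δ 1 (h.1 τ.castSucc) (h.2 τ) (h.1 τ.succ)) := by
  by_cases h0 : h.1 0 = M.init
  · simp only [histProb, if_pos h0, one_mul]
    have hAB : (∏ τ : Fin t, σ.lift τ.val (prefixH h τ) (h.2 τ) *
          M.δ 0 (h.1 τ.castSucc) (h.2 τ) (h.1 τ.succ)) *
        (∏ τ : Fin t, σ.lift τ.val (prefixH h τ) (h.2 τ) *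
          M.δ 1 (h.1 τ.castSucc) (h.2 τ) (h.1 τ.succ))
        = (∏ τ : Fin t, σ.p (h.1 τ.castSucc) (h.2 τ) *
            Real.sqrt (M.δ 0 (h.1 τ.castSucc) (h.2 τ) (h.1 τ.succ) *
              M.δ 1 (h.1 τ.castSucc) (h.2 τ) (h.1 τ.succ))) ^ 2 := by
      rw [← Finset.prod_pow, ← Finset.prod_mul_distrib]
      refine Finset.prod_congr rfl fun τ _ => ?_
      have h01 : 0 ≤ M.δ 0 (h.1 τ.castSucc) (h.2 τ) (h.1 τ.succ) *
          M.δ 1 (h.1 τ.castSucc) (h.2 τ) (h.1 τ.succ) :=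
        mul_nonneg (M.δ_nonneg _ _ _ _) (M.δ_nonneg _ _ _ _)
      have hl : σ.lift τ.val (prefixH h τ) (h.2 τ) = σ.p (h.1 τ.castSucc) (h.2 τ) := rfl
      rw [hl, mul_pow, Real.sq_sqrt h01]
      ring
    rw [hAB, Real.sqrt_sq]
    exact Finset.prod_nonneg fun τ _ =>
      mul_nonneg (σ.nonneg _ _) (Real.sqrt_nonneg _)
  · simp [histProb, h0]

/-- For a binary MMDP `M`, a stationary policy `σ`, and the matrix
`W_{ij} = Σ_{a ∈ A_i} σ(a|i)·√(δ₁(j|i,a)·δ₂(j|i,a))`, for every state `s` and every `t`,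
`e_{s_init}ᵀ Wᵗ e_s = Σ_{h_t ∈ H_t, h_t(t)=s} √(P₁^σ(h_t)·P₂^σ(h_t))`. -/
theorem matrix_power_entry_eq_sum_over_histories
    {S A : Type} [Fintype S] [Fintype A] [DecidableEq S]
    (M : BinMMDP S A) (σ : StatPolicy S A M.act) (s : S) (t : ℕ) :
    dotProduct (Pi.single M.init 1)
        (((Matrix.of fun i j : S =>
            ∑ a ∈ M.act i, σ.p i a * Real.sqrt (M.δ 0 i a j * M.δ 1 i a j)) ^ t).mulVec
          (Pi.single s 1))
      = ∑ h : Hist S A t,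
          if lastState h = s then
            Real.sqrt (histProb M.init (M.δ 0) σ.lift t h *
              histProb M.init (M.δ 1) σ.lift t h)
          else 0 := by
  classical
  rw [Matrix.mulVec_single, single_dotProduct, one_mul, Pi.smul_apply, op_smul_eq_mul,
      mul_one, Matrix.col_apply, pathSum,
      Fintype.sum_prod_type]
  refine Finset.sum_congr rfl fun f _ => ?_
  simp only [sqrt_hist M σ t, lastState]
  have h1 : ∀ τ : Fin t,
      (Matrix.of fun i j : S =>
          ∑ a ∈ M.act i, σ.p i a * Real.sqrt (M.δ 0 i a j * M.δ 1 i a j))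
        (f τ.castSucc) (f τ.succ)
      = ∑ b : A, σ.p (f τ.castSucc) b *
          Real.sqrt (M.δ 0 (f τ.castSucc) b (f τ.succ) * M.δ 1 (f τ.castSucc) b (f τ.succ)) := by
    intro τ
    show ∑ b ∈ M.act (f τ.castSucc), _ = _
    exact Finset.sum_subset (Finset.subset_univ _)
      (fun b _ hb => by rw [σ.zero_off _ _ hb, zero_mul])
  have hsum : (∏ τ : Fin t,
      (Matrix.of fun i j : S =>
          ∑ a ∈ M.act i, σ.p i a * Real.sqrt (M.δ 0 i a j * M.δ 1 i a j))
        (f τ.castSucc) (f τ.succ))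
      = ∑ a : Fin t → A, ∏ τ : Fin t, σ.p (f τ.castSucc) (a τ) *
          Real.sqrt (M.δ 0 (f τ.castSucc) (a τ) (f τ.succ) *
            M.δ 1 (f τ.castSucc) (a τ) (f τ.succ)) := by
    rw [Finset.prod_congr rfl fun τ _ => h1 τ, Finset.prod_univ_sum,
      Fintype.piFinset_univ]
  show (if f 0 = M.init ∧ f (Fin.last t) = s then _ else 0) = _
  by_cases hl : f (Fin.last t) = s
  · by_cases h0 : f 0 = M.init
    · simp only [hl, h0, and_self, if_true, if_pos, one_mul]
      exact hsum
    · simp only [h0, false_and, if_false, hl, if_true, if_pos, zero_mul,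
        Finset.sum_const_zero]
  · simp only [hl, and_false, if_false]
    rw [Finset.sum_eq_zero]
    intro a _
    simp [hl]
end

section
/- Let μ be a σ-finite measure on a measurable space Ω, let f_1, …, f_N : Ω → [0,∞) be measurable with ∫ f_i dμ = 1 for all i, let q_1, …, q_N > 0 with Σ_i q_i = 1 and θ_1, …, θ_N > 0 with Σ_i θ_i = 1, and let {R_1, …, R_N} be a measurable partition of Ω such that ω ∈ R_i implies q_i·f_i(ω) ≥ q_j·f_j(ω) for all j (a MAP partition). Define P_error = Σ_{i=1}^N θ_i · Σ_{j≠i} ∫_{R_j} f_i dμ and the pairwise Bhattacharyya coefficients B_{ij} = ∫ √(f_i·f_j) dμ. Then P_error ≥ (1/2)·max_{k ∈ {1,…,N}} Σ_{i≠k} min{θ_i, θ_k}·B_{ik}². -/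
open MeasureTheory

lemma bhatta_sq_le_two_min {Ω : Type*} [MeasurableSpace Ω] (μ : Measure Ω)
    (a b : Ω → ℝ) (ha : Measurable a) (hb : Measurable b)
    (ha0 : ∀ ω, 0 ≤ a ω) (hb0 : ∀ ω, 0 ≤ b ω)
    (hai : Integrable a μ) (hbi : Integrable b μ)
    (hIa : ∫ ω, a ω ∂μ = 1) (hIb : ∫ ω, b ω ∂μ = 1) :
    (∫ ω, Real.sqrt (a ω * b ω) ∂μ) ^ 2 ≤ 2 * ∫ ω, min (a ω) (b ω) ∂μ := by
  set m : Ω → ℝ := fun ω => min (a ω) (b ω) with hm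
  set M : Ω → ℝ := fun ω => max (a ω) (b ω) with hM
  have hm_meas : Measurable m := ha.min hb
  have hM_meas : Measurable M := ha.max hb
  have hm0 : ∀ ω, 0 ≤ m ω := fun ω => le_min (ha0 ω) (hb0 ω)
  have hM0 : ∀ ω, 0 ≤ M ω := fun ω => le_trans (ha0 ω) (le_max_left _ _)
  have hmi : Integrable m μ := by
    refine hai.mono' hm_meas.aestronglyMeasurable (ae_of_all _ fun ω => ?_)
    rw [Real.norm_of_nonneg (hm0 ω)]; exact min_le_left _ _
  have hMi : Integrable M μ := by
    refine (hai.add hbi).mono' hM_meas.aestronglyMeasurable (ae_of_all _ fun ω => ?_)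
    rw [Real.norm_of_nonneg (hM0 ω)]
    exact max_le (le_add_of_nonneg_right (hb0 ω)) (le_add_of_nonneg_left (ha0 ω))
  have hA0 : (0:ℝ) ≤ ∫ ω, m ω ∂μ := integral_nonneg hm0
  have hMval : ∫ ω, M ω ∂μ = 2 - ∫ ω, m ω ∂μ := by
    have : ∀ ω, M ω = a ω + b ω - m ω := by
      intro ω
      have := min_add_max (a ω) (b ω)
      simp only [hm, hM]; linarith
    calc ∫ ω, M ω ∂μ = ∫ ω, (a ω + b ω) - m ω ∂μ := integral_congr_ae (ae_of_all _ this)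
      _ = (∫ ω, a ω + b ω ∂μ) - ∫ ω, m ω ∂μ := integral_sub (hai.add hbi) hmi
      _ = 2 - ∫ ω, m ω ∂μ := by rw [integral_add hai hbi, hIa, hIb]; ring
  have hB2 : ∫ ω, M ω ∂μ ≤ 2 := by rw [hMval]; linarith
  have h2 : ∀ x : ℝ, 0 ≤ x → Real.sqrt x ^ (2:ℝ) = x := fun x hx => by
    rw [show (2:ℝ) = ((2:ℕ):ℝ) by norm_num, Real.rpow_natCast, Real.sq_sqrt hx]
  have hpq : (2:ℝ).HolderConjugate 2 := by rw [Real.holderConjugate_iff]; norm_num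
  have hmem : ∀ (g : Ω → ℝ), Measurable g → (∀ ω, 0 ≤ g ω) → Integrable g μ →
      MemLp (fun ω => Real.sqrt (g ω)) (ENNReal.ofReal 2) μ := by
    intro g hg hg0 hgi
    rw [show ENNReal.ofReal 2 = 2 by norm_num]
    refine (memLp_two_iff_integrable_sq (hg.sqrt.aestronglyMeasurable)).2 ?_
    exact hgi.congr (ae_of_all _ fun ω => (Real.sq_sqrt (hg0 ω)).symm)
  have CS := integral_mul_le_Lp_mul_Lq_of_nonneg (μ := μ) hpq
    (ae_of_all _ fun ω => Real.sqrt_nonneg (m ω))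
    (ae_of_all _ fun ω => Real.sqrt_nonneg (M ω))
    (hmem m hm_meas hm0 hmi) (hmem M hM_meas hM0 hMi)
  have heq1 : ∀ ω, Real.sqrt (m ω) * Real.sqrt (M ω) = Real.sqrt (a ω * b ω) := by
    intro ω
    rw [← Real.sqrt_mul (hm0 ω), min_mul_max]
  simp_rw [heq1, fun ω => h2 (m ω) (hm0 ω), fun ω => h2 (M ω) (hM0 ω)] at CS
  set A := ∫ ω, m ω ∂μ
  set B := ∫ ω, M ω ∂μ
  have hB0 : (0:ℝ) ≤ B := integral_nonneg hM0
  have hL0 : (0:ℝ) ≤ ∫ ω, Real.sqrt (a ω * b ω) ∂μ :=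
    integral_nonneg fun ω => Real.sqrt_nonneg _
  have hsq : (∫ ω, Real.sqrt (a ω * b ω) ∂μ) ^ 2 ≤ (A ^ ((1:ℝ)/2) * B ^ ((1:ℝ)/2)) ^ 2 :=
    pow_le_pow_left₀ hL0 CS 2
  have hAB : (A ^ ((1:ℝ)/2) * B ^ ((1:ℝ)/2)) ^ 2 = A * B := by
    rw [mul_pow, ← Real.rpow_natCast (A ^ ((1:ℝ)/2)) 2, ← Real.rpow_natCast (B ^ ((1:ℝ)/2)) 2,
      ← Real.rpow_mul hA0, ← Real.rpow_mul hB0]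
    norm_num
  rw [hAB] at hsq
  nlinarith
/-- **Lower bound on the probability of error for the MAP rule with `N` hypotheses.**
For densities `f i` w.r.t. a σ-finite measure `μ`, estimated priors `q i`
and true priors `θ i` (positive, summing to one), and a measurable MAP partition
`R i` of `Ω`, the probability of error
`P_error = Σ_i θ_i Σ_{j ≠ i} ∫_{R_j} f_i dμ` is at least
`(1/2)·max_k Σ_{i ≠ k} min{θ_i, θ_k}·B_{ik}²`, where `B_{ik} = ∫ √(f_i·f_k) dμ`. -/
theorem MAP_error_lower_bound_multi
    {Ω : Type*} [MeasurableSpace Ω] (μ : Measure Ω) [SigmaFinite μ]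
    (N : ℕ) (hN : 0 < N)
    (f : Fin N → Ω → ℝ) (hf : ∀ i, Measurable (f i)) (hf0 : ∀ i ω, 0 ≤ f i ω)
    (hfi : ∀ i, ∫ ω, f i ω ∂μ = 1)
    (q θ : Fin N → ℝ) (hq : ∀ i, 0 < q i) (hθpos : ∀ i, 0 < θ i)
    (hqs : ∑ i, q i = 1) (hθs : ∑ i, θ i = 1)
    (R : Fin N → Set Ω) (hRm : ∀ i, MeasurableSet (R i))
    (hdisj : Pairwise (Function.onFun Disjoint R)) (hcover : ⋃ i, R i = Set.univ)
    (hMAP : ∀ i, ∀ ω ∈ R i, ∀ j, q j * f j ω ≤ q i * f i ω) :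
    ∀ k : Fin N,
      (1 / 2) * ∑ i ∈ Finset.univ.erase k,
          min (θ i) (θ k) * (∫ ω, Real.sqrt (f i ω * f k ω) ∂μ) ^ 2
        ≤ ∑ i, θ i * ∑ j ∈ Finset.univ.erase i, ∫ ω in R j, f i ω ∂μ := by
  intro k
  -- integrability of the densities
  have hfint : ∀ i, Integrable (f i) μ := by
    intro i
    by_contra h
    have := hfi i
    rw [integral_undef h] at this
    norm_num at this
  -- min integrable
  have hmint : ∀ i j : Fin N, Integrable (fun ω => min (f i ω) (f j ω)) μ := by
    intro i j
    refine (hfint i).mono' ((hf i).min (hf j)).aestronglyMeasurable (ae_of_all _ fun ω => ?_)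
    rw [Real.norm_of_nonneg (le_min (hf0 i ω) (hf0 j ω))]
    exact min_le_left _ _
  -- decompose ∫ min over the partition
  have hdecomp : ∀ i : Fin N, ∫ ω, min (f i ω) (f k ω) ∂μ
      = ∑ j, ∫ ω in R j, min (f i ω) (f k ω) ∂μ := by
    intro i
    rw [← setIntegral_univ, ← hcover,
      integral_iUnion hRm hdisj ((hmint i k).integrableOn), tsum_fintype]
  -- bound each piece
  have hpiece : ∀ i : Fin N, i ≠ k →
      ∫ ω, min (f i ω) (f k ω) ∂μ
        ≤ (∫ ω in R i, f k ω ∂μ) + ∑ j ∈ Finset.univ.erase i, ∫ ω in R j, f i ω ∂μ := by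
    intro i hik
    rw [hdecomp i, ← Finset.add_sum_erase _ _ (Finset.mem_univ i)]
    refine add_le_add (setIntegral_mono ((hmint i k).integrableOn) ((hfint k).integrableOn)
        (fun ω => min_le_right _ _)) (Finset.sum_le_sum fun j hj => ?_)
    exact setIntegral_mono ((hmint i k).integrableOn) ((hfint i).integrableOn)
        (fun ω => min_le_left _ _)
  -- weighted pairwise bound
  have hweight : ∀ i : Fin N, i ≠ k →
      min (θ i) (θ k) * ∫ ω, min (f i ω) (f k ω) ∂μ
        ≤ θ k * (∫ ω in R i, f k ω ∂μ)
          + θ i * ∑ j ∈ Finset.univ.erase i, ∫ ω in R j, f i ω ∂μ := by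
    intro i hik
    have h1 : (0:ℝ) ≤ ∫ ω in R i, f k ω ∂μ :=
      setIntegral_nonneg (hRm i) (fun ω _ => hf0 k ω)
    have h2 : (0:ℝ) ≤ ∑ j ∈ Finset.univ.erase i, ∫ ω in R j, f i ω ∂μ :=
      Finset.sum_nonneg fun j _ => setIntegral_nonneg (hRm j) (fun ω _ => hf0 i ω)
    have h3 := hpiece i hik
    have h4 : (0:ℝ) ≤ min (θ i) (θ k) := le_min (hθpos i).le (hθpos k).le
    calc min (θ i) (θ k) * ∫ ω, min (f i ω) (f k ω) ∂μ
        ≤ min (θ i) (θ k) * ((∫ ω in R i, f k ω ∂μ)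
            + ∑ j ∈ Finset.univ.erase i, ∫ ω in R j, f i ω ∂μ) := by
          exact mul_le_mul_of_nonneg_left h3 h4
      _ = min (θ i) (θ k) * (∫ ω in R i, f k ω ∂μ)
            + min (θ i) (θ k) * ∑ j ∈ Finset.univ.erase i, ∫ ω in R j, f i ω ∂μ := by ring
      _ ≤ θ k * (∫ ω in R i, f k ω ∂μ)
            + θ i * ∑ j ∈ Finset.univ.erase i, ∫ ω in R j, f i ω ∂μ := by
          exact add_le_add (mul_le_mul_of_nonneg_right (min_le_right _ _) h1)
            (mul_le_mul_of_nonneg_right (min_le_left _ _) h2)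
  -- Bhattacharyya bound
  have hbh : ∀ i : Fin N,
      (1/2) * (min (θ i) (θ k) * (∫ ω, Real.sqrt (f i ω * f k ω) ∂μ) ^ 2)
        ≤ min (θ i) (θ k) * ∫ ω, min (f i ω) (f k ω) ∂μ := by
    intro i
    have hB := bhatta_sq_le_two_min μ (f i) (f k) (hf i) (hf k) (hf0 i) (hf0 k)
      (hfint i) (hfint k) (hfi i) (hfi k)
    have h4 : (0:ℝ) ≤ min (θ i) (θ k) := le_min (hθpos i).le (hθpos k).le
    nlinarith [mul_le_mul_of_nonneg_left hB h4]
  -- put everything together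
  calc (1 / 2) * ∑ i ∈ Finset.univ.erase k,
          min (θ i) (θ k) * (∫ ω, Real.sqrt (f i ω * f k ω) ∂μ) ^ 2
      = ∑ i ∈ Finset.univ.erase k,
          (1/2) * (min (θ i) (θ k) * (∫ ω, Real.sqrt (f i ω * f k ω) ∂μ) ^ 2) := by
        rw [Finset.mul_sum]
    _ ≤ ∑ i ∈ Finset.univ.erase k, min (θ i) (θ k) * ∫ ω, min (f i ω) (f k ω) ∂μ :=
        Finset.sum_le_sum fun i _ => hbh i
    _ ≤ ∑ i ∈ Finset.univ.erase k,
          (θ k * (∫ ω in R i, f k ω ∂μ)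
            + θ i * ∑ j ∈ Finset.univ.erase i, ∫ ω in R j, f i ω ∂μ) :=
        Finset.sum_le_sum fun i hi => hweight i (Finset.ne_of_mem_erase hi)
    _ = θ k * ∑ i ∈ Finset.univ.erase k, (∫ ω in R i, f k ω ∂μ)
          + ∑ i ∈ Finset.univ.erase k,
              θ i * ∑ j ∈ Finset.univ.erase i, ∫ ω in R j, f i ω ∂μ := by
        rw [Finset.sum_add_distrib, Finset.mul_sum]
    _ = ∑ i, θ i * ∑ j ∈ Finset.univ.erase i, ∫ ω in R j, f i ω ∂μ := by
        rw [Finset.add_sum_erase _ (fun i => θ i * ∑ j ∈ Finset.univ.erase i, ∫ ω in R j, f i ω ∂μ)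
          (Finset.mem_univ k)]
end

section
/- Let μ be a σ-finite measure on a measurable space Ω, let f_1, …, f_N : Ω → [0,∞) be measurable with ∫ f_i dμ = 1 for all i, let q_1, …, q_N > 0 with Σ_i q_i = 1 and θ_1, …, θ_N > 0 with Σ_i θ_i = 1, and let {R_1, …, R_N} be a measurable partition of Ω such that ω ∈ R_i implies q_i·f_i(ω) ≥ q_j·f_j(ω) for all j (a MAP partition). Define P_error = Σ_{i=1}^N θ_i · Σ_{j≠i} ∫_{R_j} f_i dμ and the pairwise Bhattacharyya coefficients B_{ij} = ∫ √(f_i·f_j) dμ. Then P_error ≤ max_i (θ_i/q_i) · Σ_{i<j} √(q_i·q_j)·B_{ij}. -/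
open MeasureTheory

/-- **Upper bound on the probability of error for the MAP rule with `N` hypotheses.**
For densities `f i` w.r.t. a σ-finite measure `μ`, estimated priors `q i`
and true priors `θ i` (positive, summing to one), and a measurable MAP partition
`R i` of `Ω`, the probability of error
`P_error = Σ_i θ_i Σ_{j ≠ i} ∫_{R_j} f_i dμ` is at most
`max_i (θ_i/q_i) · Σ_{i<j} √(q_i·q_j)·B_{ij}`, where `B_{ij} = ∫ √(f_i·f_j) dμ`. -/
theorem MAP_error_upper_bound_multi
    {Ω : Type*} [MeasurableSpace Ω] (μ : Measure Ω) [SigmaFinite μ]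
    (N : ℕ) (hN : 0 < N)
    (f : Fin N → Ω → ℝ) (hf : ∀ i, Measurable (f i)) (hf0 : ∀ i ω, 0 ≤ f i ω)
    (hfi : ∀ i, ∫ ω, f i ω ∂μ = 1)
    (q θ : Fin N → ℝ) (hq : ∀ i, 0 < q i) (hθpos : ∀ i, 0 < θ i)
    (hqs : ∑ i, q i = 1) (hθs : ∑ i, θ i = 1)
    (R : Fin N → Set Ω) (hRm : ∀ i, MeasurableSet (R i))
    (hdisj : Pairwise (Function.onFun Disjoint R)) (hcover : ⋃ i, R i = Set.univ)
    (hMAP : ∀ i, ∀ ω ∈ R i, ∀ j, q j * f j ω ≤ q i * f i ω) :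
    ∑ i, θ i * ∑ j ∈ Finset.univ.erase i, ∫ ω in R j, f i ω ∂μ
      ≤ (⨆ i, θ i / q i) *
          ∑ p ∈ Finset.univ.filter (fun p : Fin N × Fin N => p.1 < p.2),
            Real.sqrt (q p.1 * q p.2) * ∫ ω, Real.sqrt (f p.1 ω * f p.2 ω) ∂μ := by
  haveI : Nonempty (Fin N) := ⟨⟨0, hN⟩⟩
  set M : ℝ := ⨆ i, θ i / q i with hM
  -- integrability of f i
  have hint : ∀ i, Integrable (f i) μ := by
    intro i
    by_contra h
    have h1 := hfi i
    rw [integral_undef h] at h1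
    exact one_ne_zero h1.symm
  -- integrability of sqrt (f i * f j)
  have hint2 : ∀ i j, Integrable (fun ω => Real.sqrt (f i ω * f j ω)) μ := by
    intro i j
    refine ((hint i).add (hint j)).mono' (((hf i).mul (hf j)).sqrt.aestronglyMeasurable) ?_
    filter_upwards with ω
    rw [Real.norm_eq_abs, abs_of_nonneg (Real.sqrt_nonneg _)]
    have h1 := hf0 i ω; have h2 := hf0 j ω
    have : f i ω * f j ω ≤ (f i ω + f j ω) ^ 2 := by nlinarith
    calc Real.sqrt (f i ω * f j ω) ≤ Real.sqrt ((f i ω + f j ω) ^ 2) :=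
          Real.sqrt_le_sqrt this
      _ = f i ω + f j ω := Real.sqrt_sq (by linarith)
  have hMle : ∀ i, θ i ≤ M * q i := by
    intro i
    have h1 : θ i / q i ≤ M := by
      rw [hM]
      exact le_ciSup (Set.Finite.bddAbove (Set.finite_range (fun i => θ i / q i))) i
    calc θ i = θ i / q i * q i := (div_mul_cancel₀ (θ i) (hq i).ne').symm
      _ ≤ M * q i := by
          exact mul_le_mul_of_nonneg_right h1 (hq i).le
  have hM0 : 0 ≤ M := by
    obtain ⟨i⟩ := ‹Nonempty (Fin N)›
    have h1 : θ i / q i ≤ M := by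
      rw [hM]
      exact le_ciSup (Set.Finite.bddAbove (Set.finite_range (fun i => θ i / q i))) i
    exact le_trans (div_nonneg (hθpos i).le (hq i).le) h1
  set g : Fin N → Fin N → ℝ :=
    fun i j => Real.sqrt (q i * q j) * ∫ ω in R j, Real.sqrt (f i ω * f j ω) ∂μ with hg
  -- step 1 : termwise bound
  have step1 : ∀ i j, θ i * ∫ ω in R j, f i ω ∂μ ≤ M * g i j := by
    intro i j
    have hle : ∀ ω ∈ R j, q i * f i ω ≤ Real.sqrt (q i * q j) * Real.sqrt (f i ω * f j ω) := by
      intro ω hω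
      have h := hMAP j ω hω i
      have h1 := hf0 i ω; have h2 := hf0 j ω
      have h3 := (hq i).le; have h4 := (hq j).le
      have : q i * f i ω = Real.sqrt ((q i * f i ω) ^ 2) :=
        (Real.sqrt_sq (by positivity)).symm
      rw [this, ← Real.sqrt_mul (by positivity)]
      apply Real.sqrt_le_sqrt
      nlinarith [mul_le_mul_of_nonneg_left h (mul_nonneg h3 h1)]
    have hint3 : IntegrableOn (fun ω => q i * f i ω) (R j) μ :=
      (((hint i).const_mul (q i)).integrableOn)
    have hint4 : IntegrableOn
        (fun ω => Real.sqrt (q i * q j) * Real.sqrt (f i ω * f j ω)) (R j) μ :=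
      ((hint2 i j).const_mul _).integrableOn
    have key : ∫ ω in R j, q i * f i ω ∂μ ≤
        ∫ ω in R j, Real.sqrt (q i * q j) * Real.sqrt (f i ω * f j ω) ∂μ :=
      setIntegral_mono_on hint3 hint4 (hRm j) hle
    have hqiM : θ i * ∫ ω in R j, f i ω ∂μ ≤ M * (q i * ∫ ω in R j, f i ω ∂μ) := by
      rw [← mul_assoc]
      refine mul_le_mul_of_nonneg_right (hMle i) ?_
      exact setIntegral_nonneg (hRm j) (fun ω _ => hf0 i ω)
    calc θ i * ∫ ω in R j, f i ω ∂μ ≤ M * (q i * ∫ ω in R j, f i ω ∂μ) := hqiM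
      _ = M * ∫ ω in R j, q i * f i ω ∂μ := by rw [integral_const_mul]
      _ ≤ M * ∫ ω in R j, Real.sqrt (q i * q j) * Real.sqrt (f i ω * f j ω) ∂μ :=
          mul_le_mul_of_nonneg_left key hM0
      _ = M * g i j := by simp only [hg]; rw [integral_const_mul]
  -- step 2 : pair up
  have hpair : ∀ i j : Fin N, i < j →
      g i j + g j i ≤ Real.sqrt (q i * q j) * ∫ ω, Real.sqrt (f i ω * f j ω) ∂μ := by
    intro i j hij
    have hcom : ∀ ω, Real.sqrt (f j ω * f i ω) = Real.sqrt (f i ω * f j ω) := by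
      intro ω; rw [mul_comm]
    have hd : Disjoint (R j) (R i) := hdisj (Ne.symm hij.ne)
    have hu : ∫ ω in R j ∪ R i, Real.sqrt (f i ω * f j ω) ∂μ =
        (∫ ω in R j, Real.sqrt (f i ω * f j ω) ∂μ) +
        ∫ ω in R i, Real.sqrt (f i ω * f j ω) ∂μ :=
      setIntegral_union hd (hRm i) ((hint2 i j).integrableOn) ((hint2 i j).integrableOn)
    have hle : ∫ ω in R j ∪ R i, Real.sqrt (f i ω * f j ω) ∂μ ≤
        ∫ ω, Real.sqrt (f i ω * f j ω) ∂μ := by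
      refine setIntegral_le_integral (hint2 i j) ?_
      filter_upwards with ω using Real.sqrt_nonneg _
    have hqc : Real.sqrt (q j * q i) = Real.sqrt (q i * q j) := by rw [mul_comm]
    simp only [hg, hcom, hqc]
    rw [← mul_add, ← hu]
    exact mul_le_mul_of_nonneg_left hle (Real.sqrt_nonneg _)
  -- rewrite double sum as sum over off-diagonal pairs
  have hsum : ∑ i, ∑ j ∈ Finset.univ.erase i, g i j
      = ∑ p ∈ Finset.univ.filter (fun p : Fin N × Fin N => p.1 ≠ p.2), g p.1 p.2 := by
    rw [Finset.sum_filter, Fintype.sum_prod_type]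
    refine Finset.sum_congr rfl fun i _ => ?_
    rw [← Finset.sum_filter]
    congr 1
    ext j
    simp [ne_comm]
  have hsplit : (Finset.univ.filter (fun p : Fin N × Fin N => p.1 ≠ p.2))
      = (Finset.univ.filter (fun p : Fin N × Fin N => p.1 < p.2)) ∪
        (Finset.univ.filter (fun p : Fin N × Fin N => p.2 < p.1)) := by
    ext p
    simp only [Finset.mem_filter, Finset.mem_union, Finset.mem_univ, true_and]
    constructor
    · exact fun h => lt_or_gt_of_ne h
    · rintro (h | h); exacts [h.ne, h.ne']
  have hdisj2 : Disjoint (Finset.univ.filter (fun p : Fin N × Fin N => p.1 < p.2))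
      (Finset.univ.filter (fun p : Fin N × Fin N => p.2 < p.1)) := by
    rw [Finset.disjoint_filter]
    intro p _ h1 h2
    exact absurd h1 (not_lt_of_gt h2)
  have hswap : ∑ p ∈ Finset.univ.filter (fun p : Fin N × Fin N => p.2 < p.1), g p.1 p.2
      = ∑ p ∈ Finset.univ.filter (fun p : Fin N × Fin N => p.1 < p.2), g p.2 p.1 := by
    refine Finset.sum_equiv (Equiv.prodComm (Fin N) (Fin N)) ?_ ?_
    · intro p; simp [Equiv.prodComm]
    · intro p _; rfl
  -- main chain
  calc ∑ i, θ i * ∑ j ∈ Finset.univ.erase i, ∫ ω in R j, f i ω ∂μ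
      = ∑ i, ∑ j ∈ Finset.univ.erase i, θ i * ∫ ω in R j, f i ω ∂μ := by
        exact Finset.sum_congr rfl fun i _ => Finset.mul_sum _ _ _
    _ ≤ ∑ i, ∑ j ∈ Finset.univ.erase i, M * g i j := by
        refine Finset.sum_le_sum fun i _ => Finset.sum_le_sum fun j _ => step1 i j
    _ = M * ∑ i, ∑ j ∈ Finset.univ.erase i, g i j := by
        rw [Finset.mul_sum]
        exact Finset.sum_congr rfl fun i _ => (Finset.mul_sum _ _ _).symm
    _ = M * ∑ p ∈ Finset.univ.filter (fun p : Fin N × Fin N => p.1 < p.2),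
          (g p.1 p.2 + g p.2 p.1) := by
        rw [hsum, hsplit, Finset.sum_union hdisj2, hswap, ← Finset.sum_add_distrib]
    _ ≤ M * ∑ p ∈ Finset.univ.filter (fun p : Fin N × Fin N => p.1 < p.2),
          Real.sqrt (q p.1 * q p.2) * ∫ ω, Real.sqrt (f p.1 ω * f p.2 ω) ∂μ := by
        refine mul_le_mul_of_nonneg_left (Finset.sum_le_sum fun p hp => ?_) hM0
        exact hpair p.1 p.2 (Finset.mem_filter.mp hp).2
end

section
/- Let μ be a σ-finite measure on a measurable space Ω, let f, g : Ω → [0,∞) be measurable with ∫ f dμ = ∫ g dμ = 1, and let θ_1, θ_2 > 0. Then for every measurable set R ⊆ Ω, min{θ_1, θ_2}·(∫ √(f·g) dμ)² ≤ 2·(θ_1·∫_R f dμ + θ_2·∫_{Ω∖R} g dμ). -/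
open MeasureTheory

lemma sqrt_mul_integral_sq_le
    {Ω : Type*} [MeasurableSpace Ω] (ν : Measure Ω)
    (f g : Ω → ℝ) (hf : Measurable f) (hg : Measurable g)
    (hf0 : ∀ ω, 0 ≤ f ω) (hg0 : ∀ ω, 0 ≤ g ω)
    (hfI : Integrable f ν) (hgI : Integrable g ν) :
    (∫ ω, Real.sqrt (f ω * g ω) ∂ν) ^ 2 ≤ (∫ ω, f ω ∂ν) * (∫ ω, g ω ∂ν) := by
  have hpq : Real.HolderConjugate 2 2 := Real.HolderConjugate.two_two
  have hmf : MemLp (fun ω => Real.sqrt (f ω)) (ENNReal.ofReal 2) ν := by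
    rw [show ENNReal.ofReal 2 = 2 by norm_num]
    rw [memLp_two_iff_integrable_sq (hf.sqrt.aestronglyMeasurable)]
    refine hfI.congr (Filter.Eventually.of_forall fun ω => ?_)
    show f ω = Real.sqrt (f ω) ^ 2
    rw [sq, Real.mul_self_sqrt (hf0 ω)]
  have hmg : MemLp (fun ω => Real.sqrt (g ω)) (ENNReal.ofReal 2) ν := by
    rw [show ENNReal.ofReal 2 = 2 by norm_num]
    rw [memLp_two_iff_integrable_sq (hg.sqrt.aestronglyMeasurable)]
    refine hgI.congr (Filter.Eventually.of_forall fun ω => ?_)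
    show g ω = Real.sqrt (g ω) ^ 2
    rw [sq, Real.mul_self_sqrt (hg0 ω)]
  have key := integral_mul_le_Lp_mul_Lq_of_nonneg hpq
    (Filter.Eventually.of_forall fun ω => Real.sqrt_nonneg (f ω))
    (Filter.Eventually.of_forall fun ω => Real.sqrt_nonneg (g ω)) hmf hmg
  have h1 : (∫ ω, Real.sqrt (f ω) * Real.sqrt (g ω) ∂ν)
      = ∫ ω, Real.sqrt (f ω * g ω) ∂ν := by
    refine integral_congr_ae (Filter.Eventually.of_forall fun ω => ?_)
    show Real.sqrt (f ω) * Real.sqrt (g ω) = Real.sqrt (f ω * g ω)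
    rw [Real.sqrt_mul (hf0 ω)]
  have h2 : (∫ ω, Real.sqrt (f ω) ^ (2:ℝ) ∂ν) = ∫ ω, f ω ∂ν := by
    refine integral_congr_ae (Filter.Eventually.of_forall fun ω => ?_)
    show Real.sqrt (f ω) ^ (2:ℝ) = f ω
    rw [Real.rpow_two, sq, Real.mul_self_sqrt (hf0 ω)]
  have h3 : (∫ ω, Real.sqrt (g ω) ^ (2:ℝ) ∂ν) = ∫ ω, g ω ∂ν := by
    refine integral_congr_ae (Filter.Eventually.of_forall fun ω => ?_)
    show Real.sqrt (g ω) ^ (2:ℝ) = g ω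
    rw [Real.rpow_two, sq, Real.mul_self_sqrt (hg0 ω)]
  rw [h1, h2, h3] at key
  have hFnn : 0 ≤ ∫ ω, f ω ∂ν := integral_nonneg hf0
  have hGnn : 0 ≤ ∫ ω, g ω ∂ν := integral_nonneg hg0
  have hnn : 0 ≤ ∫ ω, Real.sqrt (f ω * g ω) ∂ν :=
    integral_nonneg fun ω => Real.sqrt_nonneg _
  calc (∫ ω, Real.sqrt (f ω * g ω) ∂ν) ^ 2
      ≤ ((∫ ω, f ω ∂ν) ^ (1/2:ℝ) * (∫ ω, g ω ∂ν) ^ (1/2:ℝ)) ^ 2 := by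
        apply pow_le_pow_left₀ hnn key
    _ = (∫ ω, f ω ∂ν) * (∫ ω, g ω ∂ν) := by
        rw [mul_pow, ← Real.rpow_natCast ((∫ ω, f ω ∂ν) ^ (1/2:ℝ)) 2,
          ← Real.rpow_natCast ((∫ ω, g ω ∂ν) ^ (1/2:ℝ)) 2,
          ← Real.rpow_mul hFnn, ← Real.rpow_mul hGnn]
        norm_num

/-- For probability densities `f, g` w.r.t. a σ-finite measure `μ`, positive weights
`θ₁, θ₂`, and any measurable set `R`,
`min{θ₁,θ₂}·(∫ √(f·g) dμ)² ≤ 2·(θ₁·∫_R f dμ + θ₂·∫_{Rᶜ} g dμ)`. -/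
theorem min_mul_bhattacharyya_sq_le
    {Ω : Type*} [MeasurableSpace Ω] (μ : Measure Ω) [SigmaFinite μ]
    (f g : Ω → ℝ) (hf : Measurable f) (hg : Measurable g)
    (hf0 : ∀ ω, 0 ≤ f ω) (hg0 : ∀ ω, 0 ≤ g ω)
    (hfi : ∫ ω, f ω ∂μ = 1) (hgi : ∫ ω, g ω ∂μ = 1)
    (θ1 θ2 : ℝ) (hθ1 : 0 < θ1) (hθ2 : 0 < θ2)
    (R : Set Ω) (hR : MeasurableSet R) :
    min θ1 θ2 * (∫ ω, Real.sqrt (f ω * g ω) ∂μ) ^ 2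
      ≤ 2 * (θ1 * (∫ ω in R, f ω ∂μ) + θ2 * (∫ ω in Rᶜ, g ω ∂μ)) := by
  have hfI : Integrable f μ := by
    by_contra h; rw [integral_undef h] at hfi; norm_num at hfi
  have hgI : Integrable g μ := by
    by_contra h; rw [integral_undef h] at hgi; norm_num at hgi
  have hsqI : Integrable (fun ω => Real.sqrt (f ω * g ω)) μ := by
    refine Integrable.mono' ((hfI.add hgI).div_const 2)
      ((hf.mul hg).sqrt.aestronglyMeasurable)
      (Filter.Eventually.of_forall fun ω => ?_)
    rw [Real.norm_of_nonneg (Real.sqrt_nonneg _)]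
    simp only [Pi.add_apply]
    nlinarith [Real.sq_sqrt (hf0 ω), Real.sq_sqrt (hg0 ω),
      Real.sqrt_nonneg (f ω), Real.sqrt_nonneg (g ω),
      sq_nonneg (Real.sqrt (f ω) - Real.sqrt (g ω)),
      Real.sqrt_mul (hf0 ω) (g ω)]
  set a := ∫ ω in R, Real.sqrt (f ω * g ω) ∂μ with ha
  set b := ∫ ω in Rᶜ, Real.sqrt (f ω * g ω) ∂μ with hb
  set A := ∫ ω in R, f ω ∂μ with hA
  set B := ∫ ω in Rᶜ, g ω ∂μ with hB
  have hsplit : a + b = ∫ ω, Real.sqrt (f ω * g ω) ∂μ :=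
    integral_add_compl hR hsqI
  have hGR : (∫ ω in R, g ω ∂μ) ≤ 1 := by
    rw [← hgi]
    exact setIntegral_le_integral hgI (Filter.Eventually.of_forall hg0)
  have hFRc : (∫ ω in Rᶜ, f ω ∂μ) ≤ 1 := by
    rw [← hfi]
    exact setIntegral_le_integral hfI (Filter.Eventually.of_forall hf0)
  have hAnn : 0 ≤ A := integral_nonneg hf0
  have hBnn : 0 ≤ B := integral_nonneg hg0
  have hFRcnn : 0 ≤ ∫ ω in Rᶜ, f ω ∂μ := integral_nonneg hf0
  have ha2 : a ^ 2 ≤ A := by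
    have h := sqrt_mul_integral_sq_le (μ.restrict R) f g hf hg hf0 hg0
      (hfI.restrict) (hgI.restrict)
    have hGRnn : 0 ≤ ∫ ω in R, g ω ∂μ := integral_nonneg hg0
    nlinarith
  have hb2 : b ^ 2 ≤ B := by
    have h := sqrt_mul_integral_sq_le (μ.restrict Rᶜ) f g hf hg hf0 hg0
      (hfI.restrict) (hgI.restrict)
    nlinarith
  have hm1 : min θ1 θ2 ≤ θ1 := min_le_left _ _
  have hm2 : min θ1 θ2 ≤ θ2 := min_le_right _ _
  have hm0 : 0 < min θ1 θ2 := lt_min hθ1 hθ2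
  rw [← hsplit]
  nlinarith [sq_nonneg (a - b), mul_le_mul_of_nonneg_right hm1 hAnn,
    mul_le_mul_of_nonneg_right hm2 hBnn]
end
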